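/- arXiv:1505.02847 — 6 statements merged into one kernel-verified Lean document; each statement's English description precedes it below -/
import Mathlib

section
/- Let A be a countable set, let X be a perfectly normal T1 topological space, and let (≺_x)_{x∈X} be a parameter-dependent preference on A over X. Then (≺_x)_{x∈X} satisfies axioms (Asy), (NT) and (CD) if and only if there exists a function U : A × X → ℝ such that (i) for every x ∈ X, U(·,x) is a utility representation of ≺_x (i.e. a ≺_x b iff U(a,x) < U(b,x) for all a,b ∈ A), and (ii) for every a ∈ A, the map x ↦ U(a,x) is continuous on X. -/
open Set Topology Filter Finset

section Vanish
variable {X : Type*} [TopologicalSpace X] [PerfectlyNormalSpace X]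

variable {X : Type*} [TopologicalSpace X] [PerfectlyNormalSpace X]

/-- In a perfectly normal space, every closed set is the zero set of a continuous
nonnegative function. -/
lemma pdp_exists_vanish {C : Set X} (hC : IsClosed C) :
    ∃ ρ : X → ℝ, Continuous ρ ∧ (∀ x, 0 ≤ ρ x) ∧ (∀ x, ρ x = 0 ↔ x ∈ C) := by
  obtain ⟨T, hTo, hTc, hTeq⟩ := PerfectlyNormalSpace.closed_gdelta hC
  rcases T.eq_empty_or_nonempty with rfl | hTne
  · refine ⟨fun _ => 0, continuous_const, fun x => le_refl 0, fun x => ?_⟩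
    simp [hTeq]
  obtain ⟨g, hg⟩ := (Set.countable_iff_exists_surjective hTne).mp hTc
  have hsub : ∀ n, C ⊆ (g n : Set X) := fun n => by
    rw [hTeq]; exact sInter_subset_of_mem (g n).2
  have hcl : ∀ n, IsClosed ((g n : Set X)ᶜ) := fun n => (hTo _ (g n).2).isClosed_compl
  have hdisj : ∀ n, Disjoint C ((g n : Set X)ᶜ) := fun n =>
    Set.disjoint_left.mpr fun a ha hc => hc (hsub n ha)
  choose f hf0 hf1 hf01 using fun n =>
    exists_continuous_zero_one_of_isClosed hC (hcl n) (hdisj n)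
  have hsumg : Summable (fun n : ℕ => (1/2 : ℝ) ^ (n+1)) := by
    have := (summable_geometric_of_lt_one (r := (1/2:ℝ)) (by norm_num) (by norm_num))
    simpa [pow_succ, mul_comm] using this.mul_right (1/2 : ℝ)
  have hbd : ∀ (n : ℕ) (x : X), ‖(1/2 : ℝ) ^ (n+1) * f n x‖ ≤ (1/2 : ℝ) ^ (n+1) := by
    intro n x
    rw [Real.norm_eq_abs, abs_mul, abs_of_nonneg (by positivity)]
    have h1 := (hf01 n x).1
    have h2 := (hf01 n x).2
    calc (1/2 : ℝ) ^ (n+1) * |f n x| ≤ (1/2 : ℝ) ^ (n+1) * 1 := by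
          apply mul_le_mul_of_nonneg_left _ (by positivity)
          rw [abs_of_nonneg h1]; exact h2
      _ = (1/2 : ℝ) ^ (n+1) := mul_one _
  set ρ : X → ℝ := fun x => ∑' n, (1/2 : ℝ) ^ (n+1) * f n x with hρdef
  have hterm : ∀ x, Summable (fun n => (1/2 : ℝ) ^ (n+1) * f n x) := fun x =>
    Summable.of_norm_bounded hsumg (fun n => hbd n x)
  have hnn : ∀ x, ∀ n : ℕ, 0 ≤ (1/2 : ℝ) ^ (n+1) * f n x := fun x n =>
    mul_nonneg (by positivity) (hf01 n x).1
  refine ⟨ρ, continuous_tsum (fun n => continuous_const.mul (f n).continuous) hsumg hbd,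
    fun x => tsum_nonneg (hnn x), fun x => ?_⟩
  constructor
  · intro h0
    by_contra hxC
    have : x ∉ ⋂₀ T := by rw [← hTeq]; exact hxC
    obtain ⟨t, htT, hxt⟩ := by simpa [Set.mem_sInter] using this
    obtain ⟨n, hn⟩ := hg ⟨t, htT⟩
    have hfx : f n x = 1 := hf1 n (by simp only [Set.mem_compl_iff, hn]; exact hxt)
    have hle : (1/2 : ℝ) ^ (n+1) * f n x ≤ ρ x :=
      Summable.le_tsum (hterm x) n (fun m _ => hnn x m)
    rw [hfx, mul_one] at hle
    have : (0:ℝ) < (1/2 : ℝ) ^ (n+1) := by positivity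
    linarith [h0 ▸ hle]
  · intro hxC
    have : ∀ n : ℕ, (1/2 : ℝ) ^ (n+1) * f n x = 0 := fun n => by
      rw [hf0 n hxC]; simp
    simp only [hρdef]
    rw [tsum_congr this, tsum_zero]

/-- In a perfectly normal space, every open set carries a continuous nonnegative
function positive exactly on it. -/
lemma pdp_exists_posOn {U : Set X} (hU : IsOpen U) :
    ∃ q : X → ℝ, Continuous q ∧ (∀ x, 0 ≤ q x) ∧ (∀ x, 0 < q x ↔ x ∈ U) := by
  obtain ⟨ρ, h1, h2, h3⟩ := pdp_exists_vanish hU.isClosed_compl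
  refine ⟨ρ, h1, h2, fun x => ?_⟩
  constructor
  · intro h
    by_contra hx
    rw [(h3 x).mpr hx] at h
    exact lt_irrefl _ h
  · intro hx
    rcases (h2 x).lt_or_eq with h | h
    · exact h
    · exact absurd ((h3 x).mp h.symm) (fun hc => hc hx)

set_option maxHeartbeats 2000000 in
/-- The key insertion step: given finitely many continuous utilities `w j` and the open
regions where the new element must be strictly above (`Op j`) resp. below (`Om j`) element
`j`, produce a continuous utility for the new element. -/
theorem pdp_step {ι : Type*} [Finite ι] (w : ι → X → ℝ) (Op Om : ι → Set X)
    (hOp : ∀ j, IsOpen (Op j)) (hOm : ∀ j, IsOpen (Om j))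
    (hdisj : ∀ j, ∀ x ∈ Op j, x ∉ Om j)
    (hw : ∀ j, Continuous (w j)) (hwb : ∀ j x, |w j x| < 1)
    (F1 : ∀ i j x, x ∈ Op j → x ∉ Op i → w j x < w i x)
    (F2 : ∀ i j x, x ∈ Om i → x ∉ Om j → w j x < w i x)
    (F3 : ∀ i j x, x ∉ Op j → x ∉ Om j → x ∉ Op i → x ∉ Om i → w j x = w i x) :
    ∃ v : X → ℝ, Continuous v ∧ (∀ x, |v x| < 1) ∧ ∀ j x,
      (x ∈ Op j → w j x < v x) ∧ (x ∈ Om j → v x < w j x) ∧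
      (x ∉ Op j → x ∉ Om j → v x = w j x) := by
  rcases isEmpty_or_nonempty ι with hι | hι
  · exact ⟨fun _ => 0, continuous_const, fun x => by norm_num, fun j => hι.elim j⟩
  have := Fintype.ofFinite ι
  -- bounds on w
  have hwlt : ∀ j x, w j x < 1 := fun j x => (abs_lt.mp (hwb j x)).2
  have hwgt : ∀ j x, -1 < w j x := fun j x => (abs_lt.mp (hwb j x)).1
  -- basic functions
  choose qp hqpc hqp0 hqppos using fun j => pdp_exists_posOn (hOp j)
  choose qm hqmc hqm0 hqmpos using fun j => pdp_exists_posOn (hOm j)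
  choose ρP hρPc hρP0 hρPz using fun (j i : ι) =>
    pdp_exists_vanish (isClosed_closure (s := Op j \ Op i))
  choose ρM hρMc hρM0 hρMz using fun (j i : ι) =>
    pdp_exists_vanish (isClosed_closure (s := Om j \ Om i))
  choose ρc hρcc hρc0 hρcz using fun (j : ι) =>
    pdp_exists_vanish (hOm j).isClosed_compl
  choose ρw hρwc hρw0 hρwz using fun (j i : ι) =>
    pdp_exists_vanish (isClosed_closure (s := Om j \ Op i))
  have hne : (Finset.univ : Finset ι).Nonempty := Finset.univ_nonempty
  -- the adapted upward slack
  set up : ι → X → ℝ := fun j x => max 0 (min (min (qp j x) ((1 - w j x)/2))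
    (Finset.univ.inf' hne (fun i => max ((w i x - w j x)/2) (ρP j i x)))) with hup_def
  set down : ι → X → ℝ := fun j x => max 0 (min (min (qm j x) ((1 + w j x)/2))
    (Finset.univ.inf' hne (fun i => max ((w j x - w i x)/2) (ρM j i x)))) with hdown_def
  have hup_cont : ∀ j, Continuous (up j) := by
    intro j
    apply continuous_const.max
    apply Continuous.min
    · exact (hqpc j).min ((continuous_const.sub (hw j)).div_const 2)
    · exact Continuous.finset_inf'_apply hne fun i _ =>
        (((hw i).sub (hw j)).div_const 2).max (hρPc j i)
  have hdown_cont : ∀ j, Continuous (down j) := by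
    intro j
    apply continuous_const.max
    apply Continuous.min
    · exact (hqmc j).min ((continuous_const.add (hw j)).div_const 2)
    · exact Continuous.finset_inf'_apply hne fun i _ =>
        (((hw j).sub (hw i)).div_const 2).max (hρMc j i)
  have hup_nonneg : ∀ j x, 0 ≤ up j x := fun j x => le_max_left _ _
  have hdown_nonneg : ∀ j x, 0 ≤ down j x := fun j x => le_max_left _ _
  have hup_zero : ∀ j x, x ∉ Op j → up j x = 0 := by
    intro j x hx
    have hq : qp j x = 0 := by
      rcases (hqp0 j x).lt_or_eq with h | h
      · exact absurd ((hqppos j x).mp h) hx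
      · exact h.symm
    have : min (min (qp j x) ((1 - w j x)/2))
        (Finset.univ.inf' hne (fun i => max ((w i x - w j x)/2) (ρP j i x))) ≤ 0 := by
      refine le_trans (min_le_left _ _) (le_trans (min_le_left _ _) (le_of_eq hq))
    simpa [hup_def] using max_eq_left this
  have hdown_zero : ∀ j x, x ∉ Om j → down j x = 0 := by
    intro j x hx
    have hq : qm j x = 0 := by
      rcases (hqm0 j x).lt_or_eq with h | h
      · exact absurd ((hqmpos j x).mp h) hx
      · exact h.symm
    have : min (min (qm j x) ((1 + w j x)/2))
        (Finset.univ.inf' hne (fun i => max ((w j x - w i x)/2) (ρM j i x))) ≤ 0 := by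
      refine le_trans (min_le_left _ _) (le_trans (min_le_left _ _) (le_of_eq hq))
    simpa [hdown_def] using max_eq_left this
  have hup_pos : ∀ j x, x ∈ Op j → 0 < up j x := by
    intro j x hx
    rw [hup_def]
    refine lt_max_of_lt_right (lt_min (lt_min ((hqppos j x).mpr hx) (by linarith [hwlt j x])) ?_)
    rw [Finset.lt_inf'_iff]
    intro i _
    by_cases hcl : x ∈ closure (Op j \ Op i)
    · have hxi : x ∉ Op i := by
        have : closure (Op j \ Op i) ⊆ (Op i)ᶜ :=
          (hOp i).isClosed_compl.closure_subset_iff.mpr (fun y hy => hy.2)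
        exact this hcl
      have := F1 i j x hx hxi
      exact lt_max_of_lt_left (by linarith)
    · refine lt_max_of_lt_right ?_
      rcases (hρP0 j i x).lt_or_eq with h | h
      · exact h
      · exact absurd ((hρPz j i x).mp h.symm) hcl
  have hdown_pos : ∀ j x, x ∈ Om j → 0 < down j x := by
    intro j x hx
    rw [hdown_def]
    refine lt_max_of_lt_right (lt_min (lt_min ((hqmpos j x).mpr hx) (by linarith [hwgt j x])) ?_)
    rw [Finset.lt_inf'_iff]
    intro i _
    by_cases hcl : x ∈ closure (Om j \ Om i)
    · have hxi : x ∉ Om i := by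
        have : closure (Om j \ Om i) ⊆ (Om i)ᶜ :=
          (hOm i).isClosed_compl.closure_subset_iff.mpr (fun y hy => hy.2)
        exact this hcl
      have := F2 j i x hx hxi
      exact lt_max_of_lt_left (by linarith)
    · refine lt_max_of_lt_right ?_
      rcases (hρM0 j i x).lt_or_eq with h | h
      · exact h
      · exact absurd ((hρMz j i x).mp h.symm) hcl
  have hup_adapt : ∀ j i x, x ∈ Op j → x ∉ Op i → up j x ≤ (w i x - w j x)/2 := by
    intro j i x hxj hxi
    have hgap : 0 < (w i x - w j x)/2 := by have := F1 i j x hxj hxi; linarith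
    have hρ : ρP j i x = 0 := (hρPz j i x).mpr (subset_closure ⟨hxj, hxi⟩)
    have : up j x ≤ max ((w i x - w j x)/2) (ρP j i x) := by
      rw [hup_def]
      refine max_le (by rw [hρ]; exact le_max_of_le_left hgap.le) ?_
      exact le_trans (min_le_right _ _) (Finset.inf'_le _ (Finset.mem_univ i))
    rwa [hρ, max_eq_left hgap.le] at this
  have hdown_adapt : ∀ j i x, x ∈ Om j → x ∉ Om i → down j x ≤ (w j x - w i x)/2 := by
    intro j i x hxj hxi
    have hgap : 0 < (w j x - w i x)/2 := by have := F2 j i x hxj hxi; linarith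
    have hρ : ρM j i x = 0 := (hρMz j i x).mpr (subset_closure ⟨hxj, hxi⟩)
    have : down j x ≤ max ((w j x - w i x)/2) (ρM j i x) := by
      rw [hdown_def]
      refine max_le (by rw [hρ]; exact le_max_of_le_left hgap.le) ?_
      exact le_trans (min_le_right _ _) (Finset.inf'_le _ (Finset.mem_univ i))
    rwa [hρ, max_eq_left hgap.le] at this
  have hup_cap : ∀ j x, up j x ≤ (1 - w j x)/2 := by
    intro j x
    rw [hup_def]
    refine max_le (by linarith [hwlt j x]) ?_
    exact le_trans (min_le_left _ _) (min_le_right _ _)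
  have hdown_cap : ∀ j x, down j x ≤ (1 + w j x)/2 := by
    intro j x
    rw [hdown_def]
    refine max_le (by linarith [hwgt j x]) ?_
    exact le_trans (min_le_left _ _) (min_le_right _ _)

  -- the drop function h
  set G : ι → ι → X → ℝ := fun j i x => w j x - w i x + down i x with hG_def
  set β : ι → ι → X → ℝ := fun j i x =>
    max (G j i x) 0 * (ρc j x / (ρc j x + ρw j i x)) with hβ_def
  have hG_cont : ∀ j i, Continuous (G j i) := fun j i =>
    ((hw j).sub (hw i)).add (hdown_cont i)
  have hfrac01 : ∀ j i x, 0 ≤ ρc j x / (ρc j x + ρw j i x) ∧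
      ρc j x / (ρc j x + ρw j i x) ≤ 1 := by
    intro j i x
    constructor
    · exact div_nonneg (hρc0 j x) (add_nonneg (hρc0 j x) (hρw0 j i x))
    · exact div_le_one_of_le₀ (le_add_of_nonneg_right (hρw0 j i x))
        (add_nonneg (hρc0 j x) (hρw0 j i x))
  have hβ_nonneg : ∀ j i x, 0 ≤ β j i x := fun j i x =>
    mul_nonneg (le_max_right _ _) (hfrac01 j i x).1
  have hβ_le : ∀ j i x, β j i x ≤ max (G j i x) 0 :=
    fun j i x => mul_le_of_le_one_right (le_max_right _ _) (hfrac01 j i x).2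
  have hβ_zero : ∀ j i x, x ∉ Om j → β j i x = 0 := by
    intro j i x hx
    have : ρc j x = 0 := (hρcz j x).mpr hx
    rw [hβ_def]; simp [this]
  -- if the denominator vanishes then G is nonpositive there
  have hGnp : ∀ j i x, ρc j x + ρw j i x = 0 → G j i x ≤ 0 := by
    intro j i x hden
    have hρc' : ρc j x = 0 := le_antisymm (by linarith [hρw0 j i x]) (hρc0 j x)
    have hρw' : ρw j i x = 0 := le_antisymm (by linarith [hρc0 j x]) (hρw0 j i x)
    have hxOmj : x ∉ Om j := by
      intro hx
      rcases (hρc0 j x).lt_or_eq with h | h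
      · exact absurd hρc' (ne_of_gt h)
      · exact absurd ((hρcz j x).mp h.symm) (fun hc => hc hx)
    have hxcl : x ∈ closure (Om j \ Op i) := (hρwz j i x).mp hρw'
    have hxOpi : x ∉ Op i := by
      have : closure (Om j \ Op i) ⊆ (Op i)ᶜ :=
        (hOp i).isClosed_compl.closure_subset_iff.mpr (fun y hy => hy.2)
      exact this hxcl
    have hxOpj : x ∉ Op j := by
      intro hx
      have hd : Disjoint (Op j) (closure (Om j)) :=
        Disjoint.closure_right (Set.disjoint_left.mpr (hdisj j)) (hOp j)
      have : x ∈ closure (Om j) := closure_mono diff_subset hxcl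
      exact (Set.disjoint_left.mp hd hx) this
    by_cases hxOmi : x ∈ Om i
    · have h1 := hdown_adapt i j x hxOmi hxOmj
      have h2 := F2 i j x hxOmi hxOmj
      rw [hG_def]; dsimp only; linarith
    · have h1 := hdown_zero i x hxOmi
      have h2 := F3 i j x hxOpj hxOmj hxOpi hxOmi
      rw [hG_def]; dsimp only; linarith
  have hβ_cont : ∀ j i, Continuous (β j i) := by
    intro j i
    rw [continuous_iff_continuousAt]
    intro x₀
    by_cases hden : ρc j x₀ + ρw j i x₀ = 0
    · have hβx0 : β j i x₀ = 0 := by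
        have : max (G j i x₀) 0 = 0 := max_eq_right (hGnp j i x₀ hden)
        rw [hβ_def]; dsimp only; rw [this, zero_mul]
      have hGcont : Continuous fun x => max (G j i x) 0 :=
        (hG_cont j i).max continuous_const
      have hGlim : Tendsto (fun x => max (G j i x) 0) (nhds x₀) (nhds 0) := by
        have := hGcont.continuousAt (x := x₀)
        rwa [ContinuousAt, max_eq_right (hGnp j i x₀ hden)] at this
      rw [ContinuousAt, hβx0]
      exact squeeze_zero (fun t => hβ_nonneg j i t) (fun t => hβ_le j i t) hGlim
    · have hfc : ContinuousAt (fun x => ρc j x / (ρc j x + ρw j i x)) x₀ :=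
        ContinuousAt.div (hρcc j).continuousAt
          ((hρcc j).add (hρwc j i)).continuousAt hden
      exact ((hG_cont j i).max continuous_const).continuousAt.mul hfc
  have hβ_adapt : ∀ j i x, x ∈ Om j → x ∉ Op i → G j i x ≤ β j i x := by
    intro j i x hxj hxi
    rcases le_or_gt (G j i x) 0 with h | h
    · exact le_trans h (hβ_nonneg j i x)
    · have hρ : ρw j i x = 0 := (hρwz j i x).mpr (subset_closure ⟨hxj, hxi⟩)
      have hρcpos : 0 < ρc j x := by
        rcases (hρc0 j x).lt_or_eq with h' | h'
        · exact h'
        · exact absurd ((hρcz j x).mp h'.symm) (fun hc => hc hxj)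
      rw [hβ_def]; dsimp only
      rw [hρ, add_zero, div_self (ne_of_gt hρcpos), mul_one]
      exact le_max_left _ _
  set hh : ι → X → ℝ := fun j x =>
    max (qm j x) (Finset.univ.sup' hne (fun i => β j i x)) with hh_def
  have hh_cont : ∀ j, Continuous (hh j) := fun j =>
    (hqmc j).max (Continuous.finset_sup'_apply hne fun i _ => hβ_cont j i)
  have hh_nonneg : ∀ j x, 0 ≤ hh j x := fun j x =>
    le_trans (hqm0 j x) (le_max_left _ _)
  have hh_pos : ∀ j x, x ∈ Om j → 0 < hh j x := fun j x hx =>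
    lt_max_of_lt_left ((hqmpos j x).mpr hx)
  have hh_zero : ∀ j x, x ∉ Om j → hh j x = 0 := by
    intro j x hx
    have hq : qm j x = 0 := by
      rcases (hqm0 j x).lt_or_eq with h | h
      · exact absurd ((hqmpos j x).mp h) hx
      · exact h.symm
    refine le_antisymm ?_ (hh_nonneg j x)
    rw [hh_def]; dsimp only
    refine max_le (le_of_eq hq) (Finset.sup'_le _ _ fun i _ => le_of_eq (hβ_zero j i x hx))
  have hh_adapt : ∀ j i x, x ∈ Om j → x ∉ Op i →
      w j x - w i x + down i x ≤ hh j x := by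
    intro j i x hxj hxi
    refine le_trans (hβ_adapt j i x hxj hxi) ?_
    exact le_trans (Finset.le_sup' (fun i => β j i x) (Finset.mem_univ i)) (le_max_right _ _)
  -- assembling
  set CC : X → ℝ := fun x => Finset.univ.inf' hne (fun i => w i x - down i x) with hCC_def
  have hCC_cont : Continuous CC :=
    Continuous.finset_inf'_apply hne fun i _ => (hw i).sub (hdown_cont i)
  have hCC_le : ∀ i x, CC x ≤ w i x - down i x := fun i x =>
    Finset.inf'_le _ (Finset.mem_univ i)
  have hCC_gt : ∀ x, -1 < CC x := by
    intro x
    rw [hCC_def]; dsimp only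
    rw [Finset.lt_inf'_iff]
    intro i _
    have := hdown_cap i x
    have := hwgt i x
    linarith
  set s : ι → X → ℝ := fun j x => w j x + up j x with hs_def
  have hs_cont : ∀ j, Continuous (s j) := fun j => (hw j).add (hup_cont j)
  set b : ι → X → ℝ := fun j x => min (s j x) (max (CC x) (s j x - hh j x)) with hb_def
  have hb_cont : ∀ j, Continuous (b j) := fun j =>
    (hs_cont j).min (hCC_cont.max ((hs_cont j).sub (hh_cont j)))
  set v : X → ℝ := fun x => Finset.univ.sup' hne (fun j => b j x) with hv_def
  have hv_cont : Continuous v :=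
    Continuous.finset_sup'_apply hne fun j _ => hb_cont j
  -- pointwise computations of b
  have hb_lo : ∀ j x, x ∈ Op j → b j x = s j x := by
    intro j x hx
    have h0 : hh j x = 0 := hh_zero j x (hdisj j x hx)
    rw [hb_def]; dsimp only
    rw [h0, sub_zero]
    exact min_eq_left (le_max_right _ _)
  have hb_eq : ∀ j x, x ∉ Op j → x ∉ Om j → b j x = w j x := by
    intro j x hxp hxm
    have h0 : hh j x = 0 := hh_zero j x hxm
    have h1 : up j x = 0 := hup_zero j x hxp
    rw [hb_def, hs_def]; dsimp only
    rw [h0, h1, add_zero, sub_zero]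
    exact min_eq_left (le_max_right _ _)
  have hb_lt_one : ∀ j x, b j x < 1 := by
    intro j x
    have h1 : b j x ≤ s j x := min_le_left _ _
    have h2 := hup_cap j x
    have h3 := hwlt j x
    rw [hs_def] at h1; dsimp only at h1
    linarith
  have hb_gt : ∀ j x, -1 < b j x := by
    intro j x
    have h1 : min (s j x) (CC x) ≤ b j x := by
      rw [hb_def]
      exact min_le_min (le_refl _) (le_max_left _ _)
    have h2 : -1 < s j x := by
      rw [hs_def]; dsimp only
      have := hup_nonneg j x; have := hwgt j x; linarith
    have h3 := hCC_gt x
    rcases min_cases (s j x) (CC x) with ⟨he, _⟩ | ⟨he, _⟩ <;> rw [he] at h1 <;> linarith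
  -- the key upper bounds
  have hb_le_eq : ∀ j x, x ∉ Op j → x ∉ Om j → ∀ j', b j' x ≤ w j x := by
    intro j x hxp hxm j'
    by_cases hj'p : x ∈ Op j'
    · have h1 := hb_lo j' x hj'p
      have h2 := hup_adapt j' j x hj'p hxp
      have h3 := F1 j j' x hj'p hxp
      rw [h1, hs_def]; dsimp only; linarith
    · by_cases hj'm : x ∈ Om j'
      · have h1 : b j' x ≤ max (CC x) (s j' x - hh j' x) := min_le_right _ _
        have h2 : CC x ≤ w j x := by
          have := hCC_le j x
          have := hdown_zero j x hxm
          linarith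
        have h3 : s j' x - hh j' x ≤ w j x := by
          have h4 := hh_adapt j' j x hj'm hxp
          have h5 := hup_zero j' x (fun hc => hdisj j' x hc hj'm)
          have h6 := hdown_zero j x hxm
          rw [hs_def]; dsimp only; linarith
        exact le_trans h1 (max_le h2 h3)
      · rw [hb_eq j' x hj'p hj'm]
        exact le_of_eq (F3 j j' x hj'p hj'm hxp hxm)
  have hb_le_up : ∀ j x, x ∈ Om j → ∀ j', b j' x ≤ w j x - down j x := by
    intro j x hxm j'
    have hxp : x ∉ Op j := fun hc => hdisj j x hc hxm
    by_cases hj'p : x ∈ Op j'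
    · have h1 := hb_lo j' x hj'p
      have h2 := hup_adapt j' j x hj'p hxp
      have h3 := hdown_adapt j j' x hxm (fun hc => hdisj j' x hj'p hc)
      rw [h1, hs_def]; dsimp only; linarith
    · by_cases hj'm : x ∈ Om j'
      · have h1 : b j' x ≤ max (CC x) (s j' x - hh j' x) := min_le_right _ _
        have h2 : CC x ≤ w j x - down j x := hCC_le j x
        have h3 : s j' x - hh j' x ≤ w j x - down j x := by
          have h4 := hh_adapt j' j x hj'm hxp
          have h5 := hup_zero j' x (fun hc => hdisj j' x hc hj'm)
          rw [hs_def]; dsimp only; linarith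
        exact le_trans h1 (max_le h2 h3)
      · have h2 := hdown_adapt j j' x hxm hj'm
        have h3 := F2 j j' x hxm hj'm
        rw [hb_eq j' x hj'p hj'm]
        linarith
  refine ⟨v, hv_cont, ?_, ?_⟩
  · intro x
    rw [abs_lt]
    constructor
    · rw [hv_def]; dsimp only
      rw [Finset.lt_sup'_iff]
      exact ⟨Classical.arbitrary ι, Finset.mem_univ _, hb_gt _ x⟩
    · rw [hv_def]; dsimp only
      rw [Finset.sup'_lt_iff]
      intro j _
      exact hb_lt_one j x
  · intro j x
    refine ⟨?_, ?_, ?_⟩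
    · intro hx
      have h1 : b j x ≤ v x := Finset.le_sup' (fun j => b j x) (Finset.mem_univ j)
      have h2 := hb_lo j x hx
      have h3 := hup_pos j x hx
      rw [h2, hs_def] at h1; dsimp only at h1; linarith
    · intro hx
      have h1 : v x ≤ w j x - down j x := by
        rw [hv_def]; dsimp only
        exact Finset.sup'_le _ _ fun j' _ => hb_le_up j x hx j'
      have h2 := hdown_pos j x hx
      linarith
    · intro hxp hxm
      refine le_antisymm ?_ ?_
      · rw [hv_def]; dsimp only
        exact Finset.sup'_le _ _ fun j' _ => hb_le_eq j x hxp hxm j'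
      · have h1 : b j x ≤ v x := Finset.le_sup' (fun j => b j x) (Finset.mem_univ j)
        rwa [hb_eq j x hxp hxm] at h1
end Vanish


section Rec
variable {A X : Type*} [TopologicalSpace X] [PerfectlyNormalSpace X]

def pdpAxioms (P : X → A → A → Prop) : Prop :=
  (∀ x a b, P x a b → ¬ P x b a) ∧
  (∀ x a b c, P x a b → P x c b ∨ P x a c) ∧
  (∀ a b, IsOpen {x | P x a b})

def pdpGoodPrev (P : X → A → A → Prop) (e : A → ℕ) (pf : ℕ → X → ℝ) (n : ℕ) : Prop :=
  (∀ m, m < n → Continuous (pf m) ∧ ∀ x, |pf m x| < 1) ∧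
  (∀ a b : A, e a < n → e b < n → ∀ x, (P x a b ↔ pf (e a) x < pf (e b) x))

def pdpGoodStep (P : X → A → A → Prop) (e : A → ℕ) (pf : ℕ → X → ℝ) (n : ℕ)
    (v : X → ℝ) : Prop :=
  Continuous v ∧ (∀ x, |v x| < 1) ∧
  ∀ a : A, e a = n → ∀ b : A, e b < n → ∀ x,
    (P x b a ↔ pf (e b) x < v x) ∧ (P x a b ↔ v x < pf (e b) x)

lemma pdp_guard_ex (P : X → A → A → Prop) (e : A → ℕ) (n : ℕ) (pf : ℕ → X → ℝ) :
    ∃ v : X → ℝ,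
      (pdpAxioms P ∧ Function.Injective e ∧ pdpGoodPrev P e pf n) →
        pdpGoodStep P e pf n v := by
  by_cases H : pdpAxioms P ∧ Function.Injective e ∧ pdpGoodPrev P e pf n
  swap
  · exact ⟨fun _ => 0, fun h => absurd h H⟩
  obtain ⟨⟨hA, hN, hC⟩, he, hg⟩ := H
  by_cases hn : ∃ a : A, e a = n
  swap
  · refine ⟨fun _ => 0, fun _ => ⟨continuous_const, fun x => by norm_num, ?_⟩⟩
    intro a ha
    exact absurd ⟨a, ha⟩ hn
  obtain ⟨a, ha⟩ := hn
  haveI : Finite {b : A // e b < n} :=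
    Finite.of_injective (fun b : {b : A // e b < n} => (⟨e b.1, b.2⟩ : Fin n))
      (fun b c h => Subtype.ext (he (by simpa [Fin.mk.injEq] using h)))
  have hF1 : ∀ (i j : {b : A // e b < n}) (x : X), x ∈ {x | P x j.1 a} →
      x ∉ {x | P x i.1 a} → pf (e j.1) x < pf (e i.1) x := by
    intro i j x hxj hxi
    have hP : P x j.1 i.1 := (hN x j.1 a i.1 hxj).resolve_left hxi
    exact (hg.2 j.1 i.1 j.2 i.2 x).mp hP
  have hF2 : ∀ (i j : {b : A // e b < n}) (x : X), x ∈ {x | P x a i.1} →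
      x ∉ {x | P x a j.1} → pf (e j.1) x < pf (e i.1) x := by
    intro i j x hxi hxj
    have hP : P x j.1 i.1 := (hN x a i.1 j.1 hxi).resolve_right hxj
    exact (hg.2 j.1 i.1 j.2 i.2 x).mp hP
  have hF3 : ∀ (i j : {b : A // e b < n}) (x : X), x ∉ {x | P x j.1 a} →
      x ∉ {x | P x a j.1} → x ∉ {x | P x i.1 a} → x ∉ {x | P x a i.1} →
      pf (e j.1) x = pf (e i.1) x := by
    intro i j x h1 h2 h3 h4
    have hn1 : ¬ P x j.1 i.1 := fun hP =>
      ((hN x j.1 i.1 a hP).elim (fun h => h4 h) (fun h => h1 h))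
    have hn2 : ¬ P x i.1 j.1 := fun hP =>
      ((hN x i.1 j.1 a hP).elim (fun h => h2 h) (fun h => h3 h))
    have g1 := hg.2 j.1 i.1 j.2 i.2 x
    have g2 := hg.2 i.1 j.1 i.2 j.2 x
    exact le_antisymm (not_lt.mp (fun hlt => hn2 (g2.mpr hlt)))
      (not_lt.mp (fun hlt => hn1 (g1.mpr hlt)))
  obtain ⟨v, hv1, hv2, hv3⟩ := pdp_step (ι := {b : A // e b < n})
    (w := fun b => pf (e b.1))
    (Op := fun b => {x | P x b.1 a}) (Om := fun b => {x | P x a b.1})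
    (fun b => hC b.1 a) (fun b => hC a b.1)
    (fun b x hx hx' => hA x b.1 a hx hx')
    (fun b => (hg.1 (e b.1) b.2).1) (fun b x => (hg.1 (e b.1) b.2).2 x)
    hF1 hF2 hF3
  refine ⟨v, fun _ => ⟨hv1, hv2, ?_⟩⟩
  intro a' ha' b hb x
  obtain rfl : a = a' := he (ha.trans ha'.symm)
  obtain ⟨h1, h2, h3⟩ := hv3 ⟨b, hb⟩ x
  constructor
  · constructor
    · exact fun hP => h1 hP
    · intro hlt
      by_contra hnP
      by_cases hQ : P x a b
      · have := h2 hQ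
        linarith
      · have := h3 hnP hQ
        linarith
  · constructor
    · exact fun hQ => h2 hQ
    · intro hlt
      by_contra hnQ
      by_cases hP : P x b a
      · have := h1 hP
        linarith
      · have := h3 hP hnQ
        linarith

noncomputable def pdpChoose0 (P : X → A → A → Prop) (e : A → ℕ) (n : ℕ)
    (pf : ℕ → X → ℝ) : X → ℝ :=
  Classical.choose (pdp_guard_ex P e n pf)

noncomputable def pdpChoose (P : X → A → A → Prop) (e : A → ℕ) (n : ℕ)
    (pf : ℕ → X → ℝ) : X → ℝ :=
  pdpChoose0 P e n (fun m => if m < n then pf m else 0)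

noncomputable def pdpFamAux (P : X → A → A → Prop) (e : A → ℕ) : ℕ → ℕ → X → ℝ
  | 0 => fun _ => 0
  | n+1 => fun m => if m = n then pdpChoose P e n (pdpFamAux P e n) else pdpFamAux P e n m

noncomputable def pdpFam (P : X → A → A → Prop) (e : A → ℕ) (n : ℕ) : X → ℝ :=
  pdpFamAux P e (n+1) n

lemma pdpChoose_congr (P : X → A → A → Prop) (e : A → ℕ) (n : ℕ)
    {pf pf' : ℕ → X → ℝ} (h : ∀ m, m < n → pf m = pf' m) :
    pdpChoose P e n pf = pdpChoose P e n pf' := by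
  have heq : (fun m => if m < n then pf m else 0) =
      (fun m => if m < n then pf' m else 0) := by
    funext m
    by_cases hm : m < n
    · simp [hm, h m hm]
    · simp [hm]
  unfold pdpChoose
  exact congrArg (pdpChoose0 P e n) heq

lemma pdpFamAux_coh (P : X → A → A → Prop) (e : A → ℕ) :
    ∀ n m, m < n → pdpFamAux P e n m = pdpFam P e m := by
  intro n
  induction n with
  | zero => exact fun m hm => absurd hm (Nat.not_lt_zero m)
  | succ n ih =>
    intro m hm
    rcases Nat.lt_succ_iff_lt_or_eq.mp hm with h | rfl
    · have h2 : pdpFamAux P e (n+1) m = pdpFamAux P e n m := by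
        simp [pdpFamAux, Nat.ne_of_lt h]
      rw [h2, ih m h]
    · rfl

lemma pdpFam_eq (P : X → A → A → Prop) (e : A → ℕ) (n : ℕ) :
    pdpFam P e n = pdpChoose P e n (pdpFam P e) := by
  have h1 : pdpFam P e n = pdpChoose P e n (pdpFamAux P e n) := by
    show pdpFamAux P e (n+1) n = _
    simp [pdpFamAux]
  rw [h1]
  exact pdpChoose_congr P e n (fun m hm => pdpFamAux_coh P e n m hm)

lemma pdpFam_spec (P : X → A → A → Prop) (e : A → ℕ) (n : ℕ) :
    (pdpAxioms P ∧ Function.Injective e ∧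
      pdpGoodPrev P e (fun m => if m < n then pdpFam P e m else 0) n) →
    pdpGoodStep P e (fun m => if m < n then pdpFam P e m else 0) n (pdpFam P e n) := by
  rw [pdpFam_eq]
  show (_ → pdpGoodStep P e _ n (pdpChoose0 P e n (fun m => if m < n then pdpFam P e m else 0)))
  exact Classical.choose_spec
    (pdp_guard_ex P e n (fun m => if m < n then pdpFam P e m else 0))

lemma pdpFam_good (P : X → A → A → Prop) (e : A → ℕ) (hax : pdpAxioms P)
    (he : Function.Injective e) : ∀ n, pdpGoodPrev P e (pdpFam P e) n := by
  intro n
  induction n with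
  | zero => exact ⟨fun m hm => absurd hm (Nat.not_lt_zero m),
      fun a b ha hb => absurd ha (Nat.not_lt_zero _)⟩
  | succ n ih =>
    have htr : pdpGoodPrev P e (fun m => if m < n then pdpFam P e m else 0) n := by
      constructor
      · intro m hm
        simpa [hm] using ih.1 m hm
      · intro a b ha hb x
        simpa [ha, hb] using ih.2 a b ha hb x
    obtain ⟨hc, hb1, hrel⟩ := pdpFam_spec P e n ⟨hax, he, htr⟩
    constructor
    · intro m hm
      rcases Nat.lt_succ_iff_lt_or_eq.mp hm with h | rfl
      · exact ih.1 m h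
      · exact ⟨hc, hb1⟩
    · intro a b ha hb x
      rcases Nat.lt_succ_iff_lt_or_eq.mp ha with ha' | ha' <;>
        rcases Nat.lt_succ_iff_lt_or_eq.mp hb with hb' | hb'
      · exact ih.2 a b ha' hb' x
      · have h := (hrel b hb' a ha' x).1
        rw [hb']
        simpa [ha'] using h
      · have h := (hrel a ha' b hb' x).2
        rw [ha']
        simpa [hb'] using h
      · obtain rfl : a = b := he (ha'.trans hb'.symm)
        constructor
        · intro hP
          exact absurd hP (hax.1 x a a hP)
        · intro hlt
          exact absurd hlt (lt_irrefl _)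
end Rec

/-- Main theorem: for countable `A` and perfectly normal T1 `X`, the axioms (Asy), (NT)
and (CD) hold iff there is a representation continuous in the parameter. -/
theorem stmt0 {A X : Type*} [Countable A] [TopologicalSpace X] [T1Space X]
    [PerfectlyNormalSpace X] (P : X → A → A → Prop) :
    ((∀ x a b, P x a b → ¬ P x b a) ∧
     (∀ x a b c, P x a b → P x c b ∨ P x a c) ∧
     (∀ a b, IsOpen {x | P x a b})) ↔
    ∃ U : A × X → ℝ,
      (∀ x a b, P x a b ↔ U (a, x) < U (b, x)) ∧
      (∀ a, Continuous fun x => U (a, x)) := by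
  constructor
  · rintro ⟨hA, hN, hC⟩
    obtain ⟨e, he⟩ := Countable.exists_injective_nat A
    have hax : pdpAxioms P := ⟨hA, hN, hC⟩
    refine ⟨fun p => pdpFam P e (e p.1) p.2, ?_, ?_⟩
    · intro x a b
      exact (pdpFam_good P e hax he (max (e a) (e b) + 1)).2 a b
        (Nat.lt_succ_of_le (le_max_left _ _)) (Nat.lt_succ_of_le (le_max_right _ _)) x
    · intro a
      exact ((pdpFam_good P e hax he (e a + 1)).1 (e a) (Nat.lt_succ_self _)).1
  · rintro ⟨U, hrep, hcont⟩
    refine ⟨?_, ?_, ?_⟩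
    · intro x a b hab hba
      rw [hrep] at hab hba
      linarith
    · intro x a b c hab
      rw [hrep] at hab ⊢
      rcases lt_or_ge (U (c, x)) (U (b, x)) with h | h
      · exact Or.inl h
      · exact Or.inr (by rw [hrep]; linarith)
    · intro a b
      have hset : {x | P x a b} = {x | U (a, x) < U (b, x)} :=
        Set.ext fun x => hrep x a b
      rw [hset]
      exact isOpen_lt (hcont a) (hcont b)
end

section
/- Let X be a T1 topological space. Then X is perfectly normal if and only if for every countable set A, every parameter-dependent preference (≺_x)_{x∈X} on A over X satisfying axioms (Asy), (NT) and (CD) admits a representation U : A × X → ℝ that is continuous in the parameter. -/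
open Set Topology Filter

noncomputable section StmtAuxSection

namespace StmtAux


/-- clamp to [0,1] -/
def cl (t : ℝ) : ℝ := max 0 (min 1 t)

lemma cl_nonneg (t : ℝ) : 0 ≤ cl t := le_max_left _ _

lemma cl_le_one (t : ℝ) : cl t ≤ 1 := max_le zero_le_one (min_le_left _ _)

lemma cl_mono : Monotone cl := fun a b h => max_le_max le_rfl (min_le_min le_rfl h)

lemma cl_of_nonpos {t : ℝ} (h : t ≤ 0) : cl t = 0 := by
  have : min 1 t ≤ 0 := le_trans (min_le_right _ _) h
  simp [cl, max_eq_left this]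

lemma cl_of_one_le {t : ℝ} (h : 1 ≤ t) : cl t = 1 := by
  simp [cl, min_eq_left h]

lemma cl_of_mem {t : ℝ} (h0 : 0 ≤ t) (h1 : t ≤ 1) : cl t = t := by
  simp [cl, min_eq_right h1, max_eq_right h0]

lemma cl_continuous : Continuous cl :=
  continuous_const.max (continuous_const.min continuous_id)

/-- tiling identity -/
lemma sum_cl (N : ℕ) : ∀ s : ℝ, 0 ≤ s → s ≤ N →
    (∑ i ∈ Finset.range N, cl (s - i)) = s := by
  induction N with
  | zero => intro s h0 h1; simp at h1 ⊢; linarith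
  | succ N ih =>
    intro s h0 h1
    rw [Finset.sum_range_succ']
    by_cases hs : 1 ≤ s
    · have : ∀ i ∈ Finset.range N, cl (s - (i + 1 : ℕ)) = cl ((s - 1) - i) := by
        intro i _; push_cast; ring_nf
      rw [Finset.sum_congr rfl this, ih (s - 1) (by linarith) (by push_cast at h1 ⊢; linarith)]
      have : cl (s - (0 : ℕ)) = 1 := cl_of_one_le (by push_cast; linarith)
      rw [this]; ring
    · push_neg at hs
      have : ∀ i ∈ Finset.range N, cl (s - (i + 1 : ℕ)) = 0 := by
        intro i _
        apply cl_of_nonpos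
        have : (1 : ℝ) ≤ (i + 1 : ℕ) := by exact_mod_cast Nat.one_le_iff_ne_zero.2 (Nat.succ_ne_zero i)
        linarith
      rw [Finset.sum_congr rfl this]
      simp [cl_of_mem h0 hs.le]

/-- ratio r = (-f)⁺ / ((-f)⁺ + g⁺) is in [0,1] -/
lemma ratio_nonneg (a b : ℝ) : 0 ≤ max (-a) 0 / (max (-a) 0 + max b 0) :=
  div_nonneg (le_max_right _ _) (by positivity)

lemma ratio_le_one (a b : ℝ) : max (-a) 0 / (max (-a) 0 + max b 0) ≤ 1 := by
  rcases eq_or_lt_of_le (le_max_right (-a) (0:ℝ)) with h | h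
  · rw [← h, zero_div]; exact zero_le_one
  · apply div_le_one_of_le₀ _ (by positivity)
    nlinarith [le_max_right b (0:ℝ)]

/-- continuity of Γ = φ * ratio given the degeneracy condition -/
lemma gamma_cont {X : Type*} [TopologicalSpace X] {φ f g : X → ℝ}
    (hφ : Continuous φ) (hf : Continuous f) (hg : Continuous g)
    (hφ0 : ∀ x, 0 ≤ φ x)
    (hkey : ∀ x, 0 ≤ f x → g x ≤ 0 → φ x = 0) :
    Continuous fun x => φ x * (max (-f x) 0 / (max (-f x) 0 + max (g x) 0)) := by
  rw [continuous_iff_continuousAt]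
  intro x₀
  set nf : X → ℝ := fun x => max (-f x) 0 with hnf
  set pg : X → ℝ := fun x => max (g x) 0 with hpg
  have hnfc : Continuous nf := (hf.neg).max continuous_const
  have hpgc : Continuous pg := hg.max continuous_const
  have hnf0 : ∀ x, 0 ≤ nf x := fun x => le_max_right _ _
  have hpg0 : ∀ x, 0 ≤ pg x := fun x => le_max_right _ _
  rcases lt_or_eq_of_le (hnf0 x₀) with hpos | hzero
  · -- nf x₀ > 0 : denominator positive, standard continuity
    have hden : nf x₀ + pg x₀ ≠ 0 := by positivity
    exact (hφ.continuousAt).mul ((hnfc.continuousAt).div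
      ((hnfc.continuousAt).add (hpgc.continuousAt)) hden)
  · -- nf x₀ = 0
    have hfx0 : 0 ≤ f x₀ := by
      by_contra h
      push_neg at h
      have : 0 < nf x₀ := lt_max_iff.2 (Or.inl (by linarith))
      rw [← hzero] at this; exact lt_irrefl _ this
    rcases lt_or_eq_of_le (hpg0 x₀) with hgpos | hgzero
    · -- pg x₀ > 0 : ratio tends to 0
      have hval : nf x₀ / (nf x₀ + pg x₀) = 0 := by rw [← hzero, zero_div]
      have hev : ∀ᶠ x in 𝓝 x₀, pg x₀ / 2 < pg x :=
        hpgc.continuousAt.eventually_const_lt (by linarith)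
      have hb : Tendsto (fun x => φ x * (nf x / (pg x₀ / 2))) (𝓝 x₀) (𝓝 0) := by
        have : Tendsto (fun x => φ x * (nf x / (pg x₀ / 2))) (𝓝 x₀)
            (𝓝 (φ x₀ * (nf x₀ / (pg x₀ / 2)))) :=
          hφ.continuousAt.mul (hnfc.continuousAt.div continuousAt_const (by positivity))
        simpa [← hzero] using this
      have : Tendsto (fun x => φ x * (nf x / (nf x + pg x))) (𝓝 x₀) (𝓝 0) := by
        apply squeeze_zero' (g := fun x => φ x * (nf x / (pg x₀ / 2)))
        · exact Eventually.of_forall fun x => mul_nonneg (hφ0 x)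
            (div_nonneg (hnf0 x) (by positivity))
        · filter_upwards [hev] with x hx
          apply mul_le_mul_of_nonneg_left _ (hφ0 x)
          have h1 : (0:ℝ) < pg x₀ / 2 := by linarith
          have h2 : pg x₀ / 2 ≤ nf x + pg x := by nlinarith [hpg0 x, hnf0 x]
          gcongr
        · exact hb
      unfold ContinuousAt
      convert this using 2
      show φ x₀ * ((-f x₀ ⊔ 0) / (-f x₀ ⊔ 0 + g x₀ ⊔ 0)) = 0
      have hz' : -f x₀ ⊔ 0 = 0 := by rw [show (-f x₀ ⊔ 0) = nf x₀ from rfl, ← hzero]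
      rw [hz', zero_div, mul_zero]
    · -- pg x₀ = 0 : φ x₀ = 0, squeeze by φ
      have hgx0 : g x₀ ≤ 0 := by
        by_contra h
        push_neg at h
        have : 0 < pg x₀ := lt_max_iff.2 (Or.inl h)
        rw [← hgzero] at this; exact lt_irrefl _ this
      have hφx0 : φ x₀ = 0 := hkey x₀ hfx0 hgx0
      have : Tendsto (fun x => φ x * (nf x / (nf x + pg x))) (𝓝 x₀) (𝓝 0) := by
        apply squeeze_zero (g := φ)
        · exact fun x => mul_nonneg (hφ0 x) (ratio_nonneg _ _)
        · intro x
          calc φ x * (nf x / (nf x + pg x)) ≤ φ x * 1 :=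
                mul_le_mul_of_nonneg_left (ratio_le_one _ _) (hφ0 x)
            _ = φ x := mul_one _
        · rw [← hφx0]; exact hφ.continuousAt
      unfold ContinuousAt
      convert this using 2
      show φ x₀ * ((-f x₀ ⊔ 0) / (-f x₀ ⊔ 0 + g x₀ ⊔ 0)) = 0
      rw [hφx0, zero_mul]


section Part2

variable {X : Type*} [TopologicalSpace X]

/-- In a normal space, a closed Gδ set is the zero set of a continuous [0,1]-valued function. -/
lemma exists_vanish [NormalSpace X] {C : Set X} (hC : IsClosed C) (hG : IsGδ C) :
    ∃ u : X → ℝ, Continuous u ∧ (∀ x, 0 ≤ u x) ∧ (∀ x, u x ≤ 1) ∧ (∀ x, u x = 0 ↔ x ∈ C) := by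
  obtain ⟨T, hTopen, hTcount, hTeq⟩ := hG
  have hTne : (insert univ T).Nonempty := ⟨univ, mem_insert _ _⟩
  obtain ⟨V, hV⟩ := (hTcount.insert univ).exists_eq_range hTne
  have hVopen : ∀ n, IsOpen (V n) := by
    intro n
    have : V n ∈ insert univ T := hV ▸ mem_range_self n
    rcases mem_insert_iff.1 this with h | h
    · rw [h]; exact isOpen_univ
    · exact hTopen _ h
  have hCeq : C = ⋂ n, V n := by
    rw [hTeq]
    ext x
    simp only [mem_sInter, mem_iInter]
    constructor
    · intro h n
      have : V n ∈ insert univ T := hV ▸ mem_range_self n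
      rcases mem_insert_iff.1 this with h' | h'
      · rw [h']; trivial
      · exact h _ h'
    · intro h t ht
      have : t ∈ insert univ T := mem_insert_of_mem _ ht
      rw [hV] at this
      obtain ⟨n, rfl⟩ := this
      exact h n
  have hsub : ∀ n, C ⊆ V n := fun n => hCeq ▸ iInter_subset V n
  -- Urysohn for each n
  have hUry : ∀ n : ℕ, ∃ f : C(X, ℝ), EqOn f 0 C ∧ EqOn f 1 (V n)ᶜ ∧ ∀ x, f x ∈ Icc (0:ℝ) 1 := by
    intro n
    exact exists_continuous_zero_one_of_isClosed hC (hVopen n).isClosed_compl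
      (disjoint_compl_right_iff_subset.2 (hsub n))
  choose f hf0 hf1 hf01 using hUry
  set u : X → ℝ := fun x => ∑' n : ℕ, (1/2 : ℝ)^(n+1) * f n x with hu
  have hsum : Summable fun n : ℕ => (1/2 : ℝ)^(n+1) := by
    apply Summable.mul_right
    exact summable_geometric_of_lt_one (by norm_num) (by norm_num)
  have hterm_le : ∀ n x, ‖(1/2 : ℝ)^(n+1) * f n x‖ ≤ (1/2 : ℝ)^(n+1) := by
    intro n x
    rw [norm_mul]
    have h1 := (hf01 n x).1
    have h2 := (hf01 n x).2
    rw [Real.norm_eq_abs, Real.norm_eq_abs, abs_of_nonneg (by positivity), abs_of_nonneg h1]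
    nlinarith [pow_pos (by norm_num : (0:ℝ) < 1/2) (n+1)]
  have hucont : Continuous u := by
    apply continuous_tsum (fun n => continuous_const.mul (f n).continuous) hsum hterm_le
  have husum : ∀ x, Summable fun n => (1/2 : ℝ)^(n+1) * f n x := by
    intro x
    apply Summable.of_norm_bounded hsum (fun n => hterm_le n x)
  have hterm_nonneg : ∀ n x, 0 ≤ (1/2 : ℝ)^(n+1) * f n x := by
    intro n x
    exact mul_nonneg (by positivity) (hf01 n x).1
  refine ⟨u, hucont, ?_, ?_, ?_⟩
  · intro x; exact tsum_nonneg (fun n => hterm_nonneg n x)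
  · intro x
    calc u x ≤ ∑' n : ℕ, (1/2 : ℝ)^(n+1) := by
          apply Summable.tsum_le_tsum _ (husum x) hsum
          intro n
          have := hterm_le n x
          rw [Real.norm_eq_abs, abs_of_nonneg (hterm_nonneg n x)] at this
          exact this
      _ = 1 := by
          have := tsum_geometric_two' 1
          simp only [one_div] at this ⊢
          calc (∑' n : ℕ, ((2:ℝ)⁻¹)^(n+1)) = ∑' n : ℕ, 1/2/2^n := by
                apply tsum_congr; intro n
                rw [pow_succ]
                field_simp
                rw [← mul_pow]; norm_num
            _ = 1 := tsum_geometric_two' 1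
  · intro x
    constructor
    · intro hx
      by_contra hxC
      rw [hCeq] at hxC
      simp only [mem_iInter, not_forall] at hxC
      obtain ⟨n, hn⟩ := hxC
      have hfn : f n x = 1 := hf1 n hn
      have : (1/2 : ℝ)^(n+1) * f n x ≤ u x := Summable.le_tsum (husum x) n (fun m _ => hterm_nonneg m x)
      rw [hfn, mul_one, hx] at this
      nlinarith [pow_pos (by norm_num : (0:ℝ) < 1/2) (n+1)]
    · intro hx
      have : ∀ n, (1/2 : ℝ)^(n+1) * f n x = 0 := by
        intro n
        rw [hf0 n hx]
        simp
      rw [hu]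
      simp only
      rw [tsum_congr this, tsum_zero]

/-- In a perfectly normal space, every open set is the strict positivity set of a
continuous [0,1]-valued function. -/
lemma exists_pos_on_open [NormalSpace X] [PerfectlyNormalSpace X] {O : Set X} (hO : IsOpen O) :
    ∃ u : X → ℝ, Continuous u ∧ (∀ x, 0 ≤ u x) ∧ (∀ x, u x ≤ 1) ∧ (∀ x, 0 < u x ↔ x ∈ O) := by
  obtain ⟨u, hc, h0, h1, hiff⟩ := exists_vanish (X := X) hO.isClosed_compl
    (PerfectlyNormalSpace.closed_gdelta hO.isClosed_compl)
  refine ⟨u, hc, h0, h1, fun x => ?_⟩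
  constructor
  · intro h
    by_contra hx
    have : u x = 0 := (hiff x).2 hx
    rw [this] at h; exact lt_irrefl _ h
  · intro h
    rcases lt_or_eq_of_le (h0 x) with h' | h'
    · exact h'
    · exact absurd ((hiff x).1 h'.symm) (by simpa using h)


end Part2

lemma tsum_half : (∑' n : ℕ, (1/2 : ℝ)^(n+1)) = 1 := by
  calc (∑' n : ℕ, (1/2:ℝ)^(n+1)) = ∑' n : ℕ, 1/2/2^n := by
        apply tsum_congr; intro n
        rw [pow_succ]
        field_simp
        rw [← mul_pow]; norm_num
    _ = 1 := tsum_geometric_two' 1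

lemma summable_half : Summable fun n : ℕ => (1/2 : ℝ)^(n+1) := by
  apply Summable.mul_right
  exact summable_geometric_of_lt_one (by norm_num) (by norm_num)

lemma half_mul_two_pow (k : ℕ) : (1/2 : ℝ)^(k+1) * 2^(k+1) = 1 := by
  rw [← mul_pow]; norm_num

/-- continuity of a finite sup of continuous real functions -/
lemma cont_sup' {X : Type*} [TopologicalSpace X] {ι : Type*} {s : Finset ι} (hs : s.Nonempty)
    {f : ι → X → ℝ} (hf : ∀ i, Continuous (f i)) :
    Continuous fun x => s.sup' hs (f · x) := by
  induction hs using Finset.Nonempty.cons_induction with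
  | singleton a => simpa using hf a
  | cons a s ha hs ih =>
    simp only [Finset.sup'_cons hs]
    exact (hf a).max ih

section Core

variable {X : Type*} [TopologicalSpace X] [NormalSpace X] [PerfectlyNormalSpace X]
variable {ι : Type*} [Fintype ι] [Nonempty ι]

/-- the ramp function at dyadic level k+1, step i -/
def tau (k i : ℕ) (t : ℝ) : ℝ := cl (2^(k+1) * t - i)

lemma tau_nonneg (k i : ℕ) (t : ℝ) : 0 ≤ tau k i t := cl_nonneg _
lemma tau_le_one (k i : ℕ) (t : ℝ) : tau k i t ≤ 1 := cl_le_one _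
lemma tau_mono (k i : ℕ) : Monotone (tau k i) := by
  intro a b h
  exact cl_mono (by nlinarith [pow_pos (by norm_num : (0:ℝ) < 2) (k+1)])
lemma tau_continuous (k i : ℕ) : Continuous (tau k i) :=
  cl_continuous.comp ((continuous_const.mul continuous_id).sub continuous_const)
lemma tau_eq_zero {k i : ℕ} {t : ℝ} (h : t ≤ i / 2^(k+1)) : tau k i t = 0 := by
  apply cl_of_nonpos
  have h2 : (0:ℝ) < 2^(k+1) := by positivity
  rw [le_div_iff₀ h2] at h
  nlinarith
lemma tau_eq_one {k i : ℕ} {t : ℝ} (h : ((i:ℝ)+1) / 2^(k+1) ≤ t) : tau k i t = 1 := by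
  apply cl_of_one_le
  have h2 : (0:ℝ) < 2^(k+1) := by positivity
  rw [div_le_iff₀ h2] at h
  nlinarith
lemma tau_sum (k : ℕ) {t : ℝ} (h0 : 0 ≤ t) (h1 : t ≤ 1) :
    (∑ i ∈ Finset.range (2^(k+1)), tau k i t) = 2^(k+1) * t := by
  have := sum_cl (2^(k+1)) (2^(k+1) * t) (by positivity)
    (by push_cast; nlinarith [pow_pos (by norm_num : (0:ℝ) < 2) (k+1)])
  simpa [tau] using this

variable (v d : ι → X → ℝ)

/-- correction term -/
def Gam (k i : ℕ) (m j : ι) (x : X) : ℝ :=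
  max (tau k i (v m x) - tau k i (v j x)) 0 *
    (max (-(d m x)) 0 / (max (-(d m x)) 0 + max (d j x) 0))

/-- base candidate -/
def th0 (k i : ℕ) (x : X) : ℝ :=
  cl (Finset.univ.sup' Finset.univ_nonempty
    (fun m => tau k i (v m x) - ∑ j, Gam v d k i m j x))

/-- strictness region -/
def Tset (k i : ℕ) : Set X :=
  {x | (∀ m, d m x < 0 ∨ v m x < (i:ℝ) / 2^(k+1)) ∧
       (∀ m, 0 < d m x ∨ ((i:ℝ)+1) / 2^(k+1) < v m x)}


variable {v d}

section Lemmas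

variable (hvc : ∀ m, Continuous (v m)) (hdc : ∀ m, Continuous (d m))
variable (hv0 : ∀ m x, 0 ≤ v m x) (hv1 : ∀ m x, v m x ≤ 1)
variable (cw : ∀ m j (x : X), 0 ≤ d m x → d j x ≤ 0 → v m x ≤ v j x)

lemma Gam_nonneg (k i : ℕ) (m j : ι) (x : X) : 0 ≤ Gam v d k i m j x :=
  mul_nonneg (le_max_right _ _) (ratio_nonneg _ _)

include cw in
lemma Gam_continuous (k i : ℕ) (m j : ι) (hvc : ∀ m, Continuous (v m))
    (hdc : ∀ m, Continuous (d m)) : Continuous (Gam v d k i m j) := by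
  apply gamma_cont
  · exact (((tau_continuous k i).comp (hvc m)).sub
      ((tau_continuous k i).comp (hvc j))).max continuous_const
  · exact hdc m
  · exact hdc j
  · intro x; exact le_max_right _ _
  · intro x hm hj
    have := cw m j x hm hj
    have : tau k i (v m x) - tau k i (v j x) ≤ 0 := by
      have := tau_mono k i this
      linarith
    exact max_eq_right this

lemma Gam_eq_zero_of_nonneg {k i : ℕ} {m : ι} (j : ι) {x : X} (hm : 0 ≤ d m x) :
    Gam v d k i m j x = 0 := by
  unfold Gam
  rw [max_eq_right (by linarith : -(d m x) ≤ 0), zero_div, mul_zero]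

lemma th0_mem (k i : ℕ) (x : X) : 0 ≤ th0 v d k i x ∧ th0 v d k i x ≤ 1 :=
  ⟨cl_nonneg _, cl_le_one _⟩

include cw in
lemma th0_continuous (k i : ℕ) (hvc : ∀ m, Continuous (v m)) (hdc : ∀ m, Continuous (d m)) :
    Continuous (th0 v d k i) := by
  apply cl_continuous.comp
  apply cont_sup'
  intro m
  exact ((tau_continuous k i).comp (hvc m)).sub
    (continuous_finset_sum _ fun j _ => Gam_continuous cw k i m j hvc hdc)

lemma th0_lower {k i : ℕ} {m : ι} {x : X} (hm : 0 ≤ d m x) :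
    tau k i (v m x) ≤ th0 v d k i x := by
  have hΓ : (∑ j, Gam v d k i m j x) = 0 :=
    Finset.sum_eq_zero fun j _ => Gam_eq_zero_of_nonneg j hm
  have h1 : tau k i (v m x) - ∑ j, Gam v d k i m j x ≤
      Finset.univ.sup' Finset.univ_nonempty
        (fun m' => tau k i (v m' x) - ∑ j, Gam v d k i m' j x) :=
    Finset.le_sup' (fun m' => tau k i (v m' x) - ∑ j, Gam v d k i m' j x) (Finset.mem_univ m)
  rw [hΓ, sub_zero] at h1
  calc tau k i (v m x) = cl (tau k i (v m x)) :=
        (cl_of_mem (tau_nonneg _ _ _) (tau_le_one _ _ _)).symm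
    _ ≤ th0 v d k i x := cl_mono h1

include cw in
lemma th0_upper {k i : ℕ} {m : ι} {x : X} (hm : d m x ≤ 0) :
    th0 v d k i x ≤ tau k i (v m x) := by
  have hsup : Finset.univ.sup' Finset.univ_nonempty
      (fun m' => tau k i (v m' x) - ∑ j, Gam v d k i m' j x) ≤ tau k i (v m x) := by
    apply Finset.sup'_le
    intro m' _
    have hsingle : Gam v d k i m' m x ≤ ∑ j, Gam v d k i m' j x :=
      Finset.single_le_sum (fun j _ => Gam_nonneg k i m' j x) (Finset.mem_univ m)
    rcases lt_or_ge (d m' x) 0 with hlt | hge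
    · -- ratio = 1, Gam m' m = positive part of difference
      have hnum : max (-(d m' x)) 0 = -(d m' x) := max_eq_left (by linarith)
      have hden : max (d m x) 0 = 0 := max_eq_right hm
      have hratio : max (-(d m' x)) 0 / (max (-(d m' x)) 0 + max (d m x) 0) = 1 := by
        rw [hnum, hden, add_zero, div_self (by linarith)]
      have hGam : Gam v d k i m' m x = max (tau k i (v m' x) - tau k i (v m x)) 0 := by
        unfold Gam; rw [hratio, mul_one]
      have : tau k i (v m' x) - max (tau k i (v m' x) - tau k i (v m x)) 0
          ≤ tau k i (v m x) := by
        have := le_max_left (tau k i (v m' x) - tau k i (v m x)) 0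
        linarith
      calc tau k i (v m' x) - ∑ j, Gam v d k i m' j x
          ≤ tau k i (v m' x) - Gam v d k i m' m x := by linarith
        _ = tau k i (v m' x) - max (tau k i (v m' x) - tau k i (v m x)) 0 := by rw [hGam]
        _ ≤ tau k i (v m x) := this
    · -- v m' ≤ v m
      have hv := cw m' m x hge hm
      have htau := tau_mono k i hv
      have hsum_nonneg : 0 ≤ ∑ j, Gam v d k i m' j x :=
        Finset.sum_nonneg fun j _ => Gam_nonneg k i m' j x
      linarith
  calc th0 v d k i x ≤ cl (tau k i (v m x)) := cl_mono hsup
    _ = tau k i (v m x) := cl_of_mem (tau_nonneg _ _ _) (tau_le_one _ _ _)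

include hvc hdc in
lemma Tset_open (k i : ℕ) : IsOpen (Tset v d k i) := by
  have heq : Tset v d k i =
      (⋂ m, ({x | d m x < 0} ∪ {x | v m x < (i:ℝ) / 2^(k+1)})) ∩
      (⋂ m, ({x | 0 < d m x} ∪ {x | ((i:ℝ)+1) / 2^(k+1) < v m x})) := by
    ext x
    simp only [Tset, mem_setOf_eq, mem_inter_iff, mem_iInter, mem_union]
  rw [heq]
  apply IsOpen.inter
  · exact isOpen_iInter_of_finite fun m =>
      (isOpen_lt (hdc m) continuous_const).union (isOpen_lt (hvc m) continuous_const)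
  · exact isOpen_iInter_of_finite fun m =>
      (isOpen_lt continuous_const (hdc m)).union (isOpen_lt continuous_const (hvc m))

end Lemmas

lemma interp_core
    (hvc : ∀ m, Continuous (v m)) (hdc : ∀ m, Continuous (d m))
    (hv0 : ∀ m x, 0 ≤ v m x) (hv1 : ∀ m x, v m x ≤ 1)
    (cs : ∀ m j (x : X), 0 < d m x → d j x ≤ 0 → v m x < v j x)
    (cs0 : ∀ m j (x : X), d m x = 0 → d j x < 0 → v m x < v j x)
    (c1e : ∀ m j (x : X), d m x = 0 → d j x = 0 → v m x = v j x)
    (bot top : ι)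
    (hbot : ∀ x, v bot x = 0 ∧ d bot x = 1)
    (htop : ∀ x, v top x = 1 ∧ d top x = -1) :
    ∃ w : X → ℝ, Continuous w ∧
      ∀ m x, (0 < d m x → v m x < w x) ∧ (d m x = 0 → w x = v m x) ∧
             (d m x < 0 → w x < v m x) := by
  classical
  have cw : ∀ m j (x : X), 0 ≤ d m x → d j x ≤ 0 → v m x ≤ v j x := by
    intro m j x hm hj
    rcases lt_or_eq_of_le hm with h | h
    · exact (cs m j x h hj).le
    · rcases lt_or_eq_of_le hj with h' | h'
      · exact (cs0 m j x h.symm h').le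
      · exact (c1e m j x h.symm h').le
  -- strictness bump functions
  choose lam hlamc hlam0 hlam1 hlampos using
    fun k i : ℕ => exists_pos_on_open (X := X) (Tset_open (v := v) (d := d) hvc hdc k i)
  -- the per-(k,i) ingredients
  set th : ℕ → ℕ → X → ℝ :=
    fun k i x => (1 - lam k i x) * th0 v d k i x + lam k i x * (1/2) with hth_def
  have hth_nonneg : ∀ k i x, 0 ≤ th k i x := by
    intro k i x
    have h1 := (th0_mem (v := v) (d := d) k i x).1
    have h2 := hlam0 k i x
    have h3 := hlam1 k i x
    have h4 : 0 ≤ (1 - lam k i x) * th0 v d k i x := mul_nonneg (by linarith) h1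
    simp only [hth_def]
    linarith
  have hth_le_one : ∀ k i x, th k i x ≤ 1 := by
    intro k i x
    have h1 := (th0_mem (v := v) (d := d) k i x).2
    have h2 := hlam0 k i x
    have h3 := hlam1 k i x
    have h4 : (1 - lam k i x) * th0 v d k i x ≤ (1 - lam k i x) * 1 :=
      mul_le_mul_of_nonneg_left h1 (by linarith)
    simp only [hth_def]
    nlinarith
  have hth_cont : ∀ k i, Continuous (th k i) := by
    intro k i
    exact ((continuous_const.sub (hlamc k i)).mul (th0_continuous cw k i hvc hdc)).add
      ((hlamc k i).mul continuous_const)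
  have hlam_zero : ∀ k i (x : X), x ∉ Tset v d k i → lam k i x = 0 := by
    intro k i x hx
    rcases lt_or_eq_of_le (hlam0 k i x) with h | h
    · exact absurd ((hlampos k i x).1 h) hx
    · exact h.symm
  have hnotT : ∀ k i (x : X) m, d m x = 0 → x ∉ Tset v d k i := by
    intro k i x m hm hx
    obtain ⟨h1, h2⟩ := hx
    rcases h1 m with h | h
    · rw [hm] at h; exact lt_irrefl _ h
    · rcases h2 m with h' | h'
      · rw [hm] at h'; exact lt_irrefl _ h'
      · have h2 : (0:ℝ) < 2^(k+1) := by positivity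
        have hlt : ((i:ℝ)) / 2^(k+1) < ((i:ℝ)+1) / 2^(k+1) := by
          gcongr
          linarith
        linarith
  have hth_lower : ∀ k i m (x : X), 0 ≤ d m x → tau k i (v m x) ≤ th k i x := by
    intro k i m x hm
    by_cases hx : x ∈ Tset v d k i
    · rcases hx.1 m with h | h
      · exact absurd h (not_lt.2 hm)
      · rw [tau_eq_zero h.le]
        exact hth_nonneg k i x
    · rw [hth_def]
      simp only [hlam_zero k i x hx]
      rw [sub_zero, one_mul, zero_mul, add_zero]
      exact th0_lower (v := v) (d := d) hm
  have hth_upper : ∀ k i m (x : X), d m x ≤ 0 → th k i x ≤ tau k i (v m x) := by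
    intro k i m x hm
    by_cases hx : x ∈ Tset v d k i
    · rcases hx.2 m with h | h
      · exact absurd h (not_lt.2 hm)
      · rw [tau_eq_one h.le]
        exact hth_le_one k i x
    · rw [hth_def]
      simp only [hlam_zero k i x hx]
      rw [sub_zero, one_mul, zero_mul, add_zero]
      exact th0_upper cw hm
  have hth_eq : ∀ k i m (x : X), d m x = 0 → th k i x = tau k i (v m x) :=
    fun k i m x hm => le_antisymm (hth_upper k i m x hm.le) (hth_lower k i m x hm.ge)
  have hth_strict_low : ∀ k i (x : X), x ∈ Tset v d k i → lam k i x / 2 ≤ th k i x := by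
    intro k i x _
    have h1 := (th0_mem (v := v) (d := d) k i x).1
    have h2 := hlam0 k i x
    have h3 := hlam1 k i x
    have : 0 ≤ (1 - lam k i x) * th0 v d k i x := mul_nonneg (by linarith) h1
    rw [hth_def]; dsimp only; linarith
  have hth_strict_high : ∀ k i (x : X), x ∈ Tset v d k i → th k i x ≤ 1 - lam k i x / 2 := by
    intro k i x _
    have h1 := (th0_mem (v := v) (d := d) k i x).2
    have h2 := hlam0 k i x
    have h3 := hlam1 k i x
    have : (1 - lam k i x) * th0 v d k i x ≤ (1 - lam k i x) * 1 :=
      mul_le_mul_of_nonneg_left h1 (by linarith)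
    rw [hth_def]; dsimp only; nlinarith
  -- levels
  set c : ℕ → ℝ := fun k => (1/2 : ℝ)^(k+1) with hc_def
  have hc_pos : ∀ k, 0 < c k := fun k => by positivity
  set L : ℕ → X → ℝ := fun k x => ∑ i ∈ Finset.range (2^(k+1)), th k i x with hL_def
  have hL_nonneg : ∀ k x, 0 ≤ L k x :=
    fun k x => Finset.sum_nonneg fun i _ => hth_nonneg k i x
  have hL_le : ∀ k x, L k x ≤ 2^(k+1) := by
    intro k x
    calc L k x ≤ ∑ i ∈ Finset.range (2^(k+1)), 1 :=
          Finset.sum_le_sum fun i _ => hth_le_one k i x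
      _ = 2^(k+1) := by simp
  set w : X → ℝ := fun x => ∑' k, c k * (c k * L k x) with hw_def
  have hterm_nonneg : ∀ k x, 0 ≤ c k * (c k * L k x) :=
    fun k x => mul_nonneg (hc_pos k).le (mul_nonneg (hc_pos k).le (hL_nonneg k x))
  have hterm_le : ∀ k (x : X), ‖c k * (c k * L k x)‖ ≤ c k := by
    intro k x
    rw [Real.norm_eq_abs, abs_of_nonneg (hterm_nonneg k x)]
    have h1 : c k * L k x ≤ c k * 2^(k+1) := mul_le_mul_of_nonneg_left (hL_le k x) (hc_pos k).le
    have h2 : c k * (2:ℝ)^(k+1) = 1 := half_mul_two_pow k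
    nlinarith [hc_pos k, hL_nonneg k x]
  have hsummable : ∀ x, Summable fun k => c k * (c k * L k x) := by
    intro x
    exact Summable.of_norm_bounded summable_half (fun k => hterm_le k x)
  have hw_cont : Continuous w := by
    apply continuous_tsum _ summable_half hterm_le
    intro k
    exact continuous_const.mul (continuous_const.mul
      (continuous_finset_sum _ fun i _ => hth_cont k i))
  -- midpoint identity
  have hMid : ∀ t : ℝ, (∑' k, c k * (c k * (2^(k+1) * t))) = t := by
    intro t
    have heq : ∀ k : ℕ, c k * (c k * (2^(k+1) * t)) = c k * t := by
      intro k
      have := half_mul_two_pow k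
      calc c k * (c k * (2^(k+1) * t)) = c k * ((c k * 2^(k+1)) * t) := by ring
        _ = c k * t := by rw [hc_def]; dsimp only; rw [this, one_mul]
    rw [tsum_congr heq, tsum_mul_right, tsum_half, one_mul]
  have hsummable_tau : ∀ t : ℝ, Summable fun k => c k * (c k * (2^(k+1) * t)) := by
    intro t
    have heq : ∀ k : ℕ, c k * (c k * (2^(k+1) * t)) = c k * t := by
      intro k
      have := half_mul_two_pow k
      calc c k * (c k * (2^(k+1) * t)) = c k * ((c k * 2^(k+1)) * t) := by ring
        _ = c k * t := by rw [hc_def]; dsimp only; rw [this, one_mul]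
    simp only [heq]
    exact summable_half.mul_right t
  -- equality case
  have hveq : ∀ m (x : X), d m x = 0 → w x = v m x := by
    intro m x hm
    have hLk : ∀ k, L k x = 2^(k+1) * v m x := by
      intro k
      rw [hL_def]
      dsimp only
      rw [Finset.sum_congr rfl (fun i _ => hth_eq k i m x hm)]
      exact tau_sum k (hv0 m x) (hv1 m x)
    rw [hw_def]
    dsimp only
    rw [tsum_congr (fun k => by rw [hLk k]), hMid (v m x)]
  -- termwise inequalities
  have hterm_ge : ∀ m (x : X), 0 ≤ d m x →
      ∀ k, c k * (c k * (2^(k+1) * v m x)) ≤ c k * (c k * L k x) := by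
    intro m x hm k
    have h1 : (2:ℝ)^(k+1) * v m x = ∑ i ∈ Finset.range (2^(k+1)), tau k i (v m x) :=
      (tau_sum k (hv0 m x) (hv1 m x)).symm
    have h2 : (∑ i ∈ Finset.range (2^(k+1)), tau k i (v m x)) ≤ L k x :=
      Finset.sum_le_sum fun i _ => hth_lower k i m x hm
    apply mul_le_mul_of_nonneg_left _ (hc_pos k).le
    apply mul_le_mul_of_nonneg_left _ (hc_pos k).le
    rw [h1]; exact h2
  have hterm_le' : ∀ m (x : X), d m x ≤ 0 →
      ∀ k, c k * (c k * L k x) ≤ c k * (c k * (2^(k+1) * v m x)) := by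
    intro m x hm k
    have h1 : (2:ℝ)^(k+1) * v m x = ∑ i ∈ Finset.range (2^(k+1)), tau k i (v m x) :=
      (tau_sum k (hv0 m x) (hv1 m x)).symm
    have h2 : L k x ≤ ∑ i ∈ Finset.range (2^(k+1)), tau k i (v m x) :=
      Finset.sum_le_sum fun i _ => hth_upper k i m x hm
    apply mul_le_mul_of_nonneg_left _ (hc_pos k).le
    apply mul_le_mul_of_nonneg_left _ (hc_pos k).le
    rw [h1]; exact h2
  -- the key strictness construction
  have hfindT : ∀ (x : X), (∀ m', d m' x ≠ 0) → ∃ k i, x ∈ Tset v d k i ∧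
      i ∈ Finset.range (2^(k+1)) ∧
      (∀ m', 0 < d m' x → v m' x ≤ (i:ℝ)/2^(k+1) ∧ tau k i (v m' x) = 0) ∧
      (∀ m', d m' x < 0 → ((i:ℝ)+1)/2^(k+1) ≤ v m' x ∧ tau k i (v m' x) = 1) := by
    intro x hz
    set Sp : Finset ι := Finset.univ.filter (fun m' => 0 < d m' x) with hSp_def
    set Sm : Finset ι := Finset.univ.filter (fun m' => d m' x < 0) with hSm_def
    have hSp_ne : Sp.Nonempty := ⟨bot, Finset.mem_filter.2 ⟨Finset.mem_univ _,
      by rw [(hbot x).2]; norm_num⟩⟩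
    have hSm_ne : Sm.Nonempty := ⟨top, Finset.mem_filter.2 ⟨Finset.mem_univ _,
      by rw [(htop x).2]; norm_num⟩⟩
    set G : ℝ := Sp.sup' hSp_ne (fun m' => v m' x) with hG_def
    set H : ℝ := Sm.inf' hSm_ne (fun m' => v m' x) with hH_def
    have hGH : G < H := by
      rw [hG_def, Finset.sup'_lt_iff]
      intro a ha
      rw [Finset.lt_inf'_iff]
      intro b hb
      exact cs a b x (Finset.mem_filter.1 ha).2 (Finset.mem_filter.1 hb).2.le
    have hG0 : 0 ≤ G := by
      have : v bot x ≤ G := Finset.le_sup' (fun m' => v m' x) (Finset.mem_filter.2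
        ⟨Finset.mem_univ _, by rw [(hbot x).2]; norm_num⟩)
      rw [(hbot x).1] at this; exact this
    have hH1 : H ≤ 1 := by
      have : H ≤ v top x := Finset.inf'_le (fun m' => v m' x) (Finset.mem_filter.2
        ⟨Finset.mem_univ _, by rw [(htop x).2]; norm_num⟩)
      rw [(htop x).1] at this; exact this
    obtain ⟨n, hn⟩ := pow_unbounded_of_one_lt (R := ℝ) (2/(H - G)) (by norm_num : (1:ℝ) < 2)
    have hpow : 2/(2:ℝ)^(n+1) < H - G := by
      have h2 : (0:ℝ) < 2^n := by positivity
      have h3 : (0:ℝ) < 2^(n+1) := by positivity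
      have hHG : 0 < H - G := by linarith
      rw [div_lt_iff₀ h3]
      rw [div_lt_iff₀ hHG] at hn
      have : (2:ℝ)^n ≤ 2^(n+1) := by
        apply pow_le_pow_right₀ (by norm_num) (by omega)
      nlinarith
    set k := n with hk_def
    set K : ℝ := 2^(k+1) with hK_def
    have hKpos : (0:ℝ) < K := by positivity
    set i : ℕ := ⌊G * K⌋₊ + 1 with hi_def
    have hip : G < (i:ℝ)/K := by
      rw [lt_div_iff₀ hKpos]
      have := Nat.lt_floor_add_one (G * K)
      push_cast [hi_def]
      linarith
    have hiq : ((i:ℝ)+1)/K < H := by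
      rw [div_lt_iff₀ hKpos]
      have hfl : ((⌊G * K⌋₊ : ℝ)) ≤ G * K := Nat.floor_le (by positivity)
      have : ((i:ℝ)+1) ≤ G * K + 2 := by
        push_cast [hi_def]
        linarith
      have h2K : 2 < (H - G) * K := by
        rw [div_lt_iff₀ hKpos] at hpow
        linarith [hpow]
      nlinarith
    have hiN : i ∈ Finset.range (2^(k+1)) := by
      rw [Finset.mem_range]
      have h1 : ((i:ℝ)+1)/K < 1 := lt_of_lt_of_le hiq hH1
      rw [div_lt_one hKpos] at h1
      have : (i:ℝ) < 2^(k+1) := by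
        rw [hK_def] at h1
        linarith
      exact_mod_cast this
    have hmem : x ∈ Tset v d k i := by
      constructor
      · intro m'
        rcases lt_trichotomy (d m' x) 0 with h | h | h
        · exact Or.inl h
        · exact absurd h (hz m')
        · right
          calc v m' x ≤ G := Finset.le_sup' (fun a => v a x)
                (Finset.mem_filter.2 ⟨Finset.mem_univ _, h⟩)
            _ < (i:ℝ)/2^(k+1) := hip
      · intro m'
        rcases lt_trichotomy (d m' x) 0 with h | h | h
        · right
          calc ((i:ℝ)+1)/2^(k+1) < H := hiq
            _ ≤ v m' x := Finset.inf'_le (fun a => v a x)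
                (Finset.mem_filter.2 ⟨Finset.mem_univ _, h⟩)
        · exact absurd h (hz m')
        · exact Or.inl h
    refine ⟨k, i, hmem, hiN, ?_, ?_⟩
    · intro m' hm'
      have h1 : v m' x ≤ G := Finset.le_sup' (fun a => v a x)
        (Finset.mem_filter.2 ⟨Finset.mem_univ _, hm'⟩)
      have h2 : v m' x ≤ (i:ℝ)/2^(k+1) := le_of_lt (lt_of_le_of_lt h1 hip)
      exact ⟨h2, tau_eq_zero h2⟩
    · intro m' hm'
      have h1 : H ≤ v m' x := Finset.inf'_le (fun a => v a x)
        (Finset.mem_filter.2 ⟨Finset.mem_univ _, hm'⟩)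
      have h2 : ((i:ℝ)+1)/2^(k+1) ≤ v m' x := le_of_lt (lt_of_lt_of_le hiq h1)
      exact ⟨h2, tau_eq_one h2⟩
  -- strict above
  have hlt_w : ∀ m (x : X), 0 < d m x → v m x < w x := by
    intro m x hm
    by_cases hz : ∃ m', d m' x = 0
    · obtain ⟨m', hm'⟩ := hz
      rw [hveq m' x hm']
      exact cs m m' x hm hm'.le
    · push_neg at hz
      obtain ⟨k, i, hmem, hiN, hplus, _⟩ := hfindT x hz
      have hlam_pos : 0 < lam k i x := (hlampos k i x).2 hmem
      have hstrict : c k * (c k * (2^(k+1) * v m x)) < c k * (c k * L k x) := by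
        apply mul_lt_mul_of_pos_left _ (hc_pos k)
        apply mul_lt_mul_of_pos_left _ (hc_pos k)
        have h1 : (2:ℝ)^(k+1) * v m x = ∑ i' ∈ Finset.range (2^(k+1)), tau k i' (v m x) :=
          (tau_sum k (hv0 m x) (hv1 m x)).symm
        rw [h1, hL_def]
        apply Finset.sum_lt_sum (fun i' _ => hth_lower k i' m x hm.le)
        refine ⟨i, hiN, ?_⟩
        rw [(hplus m hm).2]
        calc (0:ℝ) < lam k i x / 2 := by linarith
          _ ≤ th k i x := hth_strict_low k i x hmem
      calc v m x = ∑' k', c k' * (c k' * (2^(k'+1) * v m x)) := (hMid (v m x)).symm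
        _ < w x := by
            rw [hw_def]
            exact Summable.tsum_lt_tsum_of_nonneg
              (fun b => mul_nonneg (hc_pos b).le (mul_nonneg (hc_pos b).le
                (mul_nonneg (by positivity) (hv0 m x))))
              (fun b => hterm_ge m x hm.le b) hstrict (hsummable x)
  -- strict below
  have hgt_w : ∀ m (x : X), d m x < 0 → w x < v m x := by
    intro m x hm
    by_cases hz : ∃ m', d m' x = 0
    · obtain ⟨m', hm'⟩ := hz
      rw [hveq m' x hm']
      exact cs0 m' m x hm' hm
    · push_neg at hz
      obtain ⟨k, i, hmem, hiN, _, hminus⟩ := hfindT x hz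
      have hlam_pos : 0 < lam k i x := (hlampos k i x).2 hmem
      have hstrict : c k * (c k * L k x) < c k * (c k * (2^(k+1) * v m x)) := by
        apply mul_lt_mul_of_pos_left _ (hc_pos k)
        apply mul_lt_mul_of_pos_left _ (hc_pos k)
        have h1 : (2:ℝ)^(k+1) * v m x = ∑ i' ∈ Finset.range (2^(k+1)), tau k i' (v m x) :=
          (tau_sum k (hv0 m x) (hv1 m x)).symm
        rw [h1, hL_def]
        apply Finset.sum_lt_sum (fun i' _ => hth_upper k i' m x hm.le)
        refine ⟨i, hiN, ?_⟩
        rw [(hminus m hm).2]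
        calc th k i x ≤ 1 - lam k i x / 2 := hth_strict_high k i x hmem
          _ < 1 := by linarith
      calc w x < ∑' k', c k' * (c k' * (2^(k'+1) * v m x)) := by
            rw [hw_def]
            exact Summable.tsum_lt_tsum_of_nonneg (fun b => hterm_nonneg b x)
              (fun b => hterm_le' m x hm.le b) hstrict (hsummable_tau (v m x))
        _ = v m x := hMid (v m x)
  exact ⟨w, hw_cont, fun m x => ⟨hlt_w m x, hveq m x, hgt_w m x⟩⟩


lemma interp {ι : Type*} [Fintype ι]
    (v d : ι → X → ℝ)
    (hvc : ∀ m, Continuous (v m)) (hdc : ∀ m, Continuous (d m))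
    (hv0 : ∀ m x, 0 < v m x) (hv1 : ∀ m x, v m x < 1)
    (cs : ∀ m j (x : X), 0 < d m x → d j x ≤ 0 → v m x < v j x)
    (cs0 : ∀ m j (x : X), d m x = 0 → d j x < 0 → v m x < v j x)
    (c1e : ∀ m j (x : X), d m x = 0 → d j x = 0 → v m x = v j x) :
    ∃ w : X → ℝ, Continuous w ∧ (∀ x, 0 < w x ∧ w x < 1) ∧
      ∀ m x, (0 < d m x → v m x < w x) ∧ (d m x = 0 → w x = v m x) ∧
             (d m x < 0 → w x < v m x) := by
  classical
  set ve : ι ⊕ Bool → X → ℝ := Sum.elim v (fun b _ => if b then 1 else 0) with hve_def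
  set de : ι ⊕ Bool → X → ℝ := Sum.elim d (fun b _ => if b then -1 else 1) with hde_def
  have hve_inl : ∀ (a : ι) (x : X), ve (Sum.inl a) x = v a x := fun a x => rfl
  have hde_inl : ∀ (a : ι) (x : X), de (Sum.inl a) x = d a x := fun a x => rfl
  have hve_bot : ∀ x : X, ve (Sum.inr false) x = 0 := fun x => rfl
  have hve_top : ∀ x : X, ve (Sum.inr true) x = 1 := fun x => rfl
  have hde_bot : ∀ x : X, de (Sum.inr false) x = 1 := fun x => rfl
  have hde_top : ∀ x : X, de (Sum.inr true) x = -1 := fun x => rfl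
  have hvec : ∀ m, Continuous (ve m) := by
    intro m
    rcases m with a | b
    · exact hvc a
    · exact continuous_const
  have hdec : ∀ m, Continuous (de m) := by
    intro m
    rcases m with a | b
    · exact hdc a
    · exact continuous_const
  have hve0 : ∀ m x, 0 ≤ ve m x := by
    intro m x
    rcases m with a | b
    · exact (hv0 a x).le
    · rcases b with _ | _ <;> simp [hve_def]
  have hve1 : ∀ m x, ve m x ≤ 1 := by
    intro m x
    rcases m with a | b
    · exact (hv1 a x).le
    · rcases b with _ | _ <;> simp [hve_def]
  have cse : ∀ m j (x : X), 0 < de m x → de j x ≤ 0 → ve m x < ve j x := by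
    intro m j x hm hj
    rcases m with a | b
    · rcases j with a' | b'
      · exact cs a a' x hm hj
      · rcases b' with _ | _
        · rw [hde_bot] at hj; norm_num at hj
        · rw [hve_top]; exact hv1 a x
    · rcases b with _ | _
      · rcases j with a' | b'
        · rw [hve_bot]; exact hv0 a' x
        · rcases b' with _ | _
          · rw [hde_bot] at hj; norm_num at hj
          · rw [hve_bot, hve_top]; norm_num
      · rw [hde_top] at hm; norm_num at hm
  have cs0e : ∀ m j (x : X), de m x = 0 → de j x < 0 → ve m x < ve j x := by
    intro m j x hm hj
    rcases m with a | b
    · rcases j with a' | b'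
      · exact cs0 a a' x hm hj
      · rcases b' with _ | _
        · rw [hde_bot] at hj; norm_num at hj
        · rw [hve_top]; exact hv1 a x
    · rcases b with _ | _
      · rw [hde_bot] at hm; norm_num at hm
      · rw [hde_top] at hm; norm_num at hm
  have c1ee : ∀ m j (x : X), de m x = 0 → de j x = 0 → ve m x = ve j x := by
    intro m j x hm hj
    rcases m with a | b
    · rcases j with a' | b'
      · exact c1e a a' x hm hj
      · rcases b' with _ | _
        · rw [hde_bot] at hj; norm_num at hj
        · rw [hde_top] at hj; norm_num at hj
    · rcases b with _ | _
      · rw [hde_bot] at hm; norm_num at hm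
      · rw [hde_top] at hm; norm_num at hm
  obtain ⟨w, hwc, hw⟩ := interp_core (v := ve) (d := de) hvec hdec hve0 hve1 cse cs0e c1ee
    (Sum.inr false) (Sum.inr true)
    (fun x => ⟨hve_bot x, hde_bot x⟩) (fun x => ⟨hve_top x, hde_top x⟩)
  refine ⟨w, hwc, ?_, ?_⟩
  · intro x
    constructor
    · have := (hw (Sum.inr false) x).1 (by rw [hde_bot]; norm_num)
      rw [hve_bot] at this; exact this
    · have := (hw (Sum.inr true) x).2.2 (by rw [hde_top]; norm_num)
      rw [hve_top] at this; exact this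
  · intro m x
    exact hw (Sum.inl m) x

end Core

section Recursion

variable {X : Type*} [TopologicalSpace X] [NormalSpace X] [PerfectlyNormalSpace X]
variable {A : Type}

/-- bundled data for the recursion -/
structure PrefSetup (X : Type*) [TopologicalSpace X] (A : Type) : Type _ where
  P : X → A → A → Prop
  e : ℕ → A
  D : A → A → X → ℝ
  Dcont : ∀ a b, Continuous (D a b)
  pos_iff : ∀ a b x, 0 < D a b x ↔ P x a b
  neg_iff : ∀ a b x, D a b x < 0 ↔ P x b a
  asy : ∀ x a b, P x a b → ¬ P x b a
  nt : ∀ x a b c, P x a b → P x c b ∨ P x a c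

lemma PrefSetup.zero_no₁ (S : PrefSetup X A) {a b : A} {x : X} (h : S.D a b x = 0) :
    ¬ S.P x a b := fun hp => by
  have := (S.pos_iff a b x).2 hp; rw [h] at this; exact lt_irrefl _ this

lemma PrefSetup.zero_no₂ (S : PrefSetup X A) {a b : A} {x : X} (h : S.D a b x = 0) :
    ¬ S.P x b a := fun hp => by
  have := (S.neg_iff a b x).2 hp; rw [h] at this; exact lt_irrefl _ this

structure RecData (S : PrefSetup X A) (n : ℕ) : Type _ where
  V : Fin n → X → ℝ
  cont : ∀ m, Continuous (V m)
  lb : ∀ m x, 0 < V m x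
  ub : ∀ m x, V m x < 1
  rep : ∀ (m l : Fin n) (x : X), S.P x (S.e m) (S.e l) ↔ V m x < V l x

lemma stepSpec (S : PrefSetup X A) (n : ℕ) (R : RecData S n) :
    ∃ w : X → ℝ, Continuous w ∧ (∀ x, 0 < w x ∧ w x < 1) ∧
      ∀ (m : Fin n) x, (0 < S.D (S.e m) (S.e n) x → R.V m x < w x) ∧
        (S.D (S.e m) (S.e n) x = 0 → w x = R.V m x) ∧
        (S.D (S.e m) (S.e n) x < 0 → w x < R.V m x) := by
  apply interp (v := R.V) (d := fun m => S.D (S.e m) (S.e n)) R.cont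
    (fun m => S.Dcont _ _) R.lb R.ub
  · -- cs
    intro m j x hm hj
    have hPm : S.P x (S.e m) (S.e n) := (S.pos_iff _ _ _).1 hm
    have hPj : ¬ S.P x (S.e j) (S.e n) := fun hp => by
      have := (S.pos_iff _ _ _).2 hp; linarith
    rcases S.nt x (S.e m) (S.e n) (S.e j) hPm with h | h
    · exact absurd h hPj
    · exact (R.rep m j x).1 h
  · -- cs0
    intro m j x hm hj
    have hPj : S.P x (S.e n) (S.e j) := (S.neg_iff _ _ _).1 hj
    rcases S.nt x (S.e n) (S.e j) (S.e m) hPj with h | h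
    · exact (R.rep m j x).1 h
    · exact absurd h (S.zero_no₂ hm)
  · -- c1e
    intro m j x hm hj
    have h1 : ¬ S.P x (S.e m) (S.e j) := by
      intro hp
      rcases S.nt x (S.e m) (S.e j) (S.e n) hp with h | h
      · exact S.zero_no₂ hj h
      · exact S.zero_no₁ hm h
    have h2 : ¬ S.P x (S.e j) (S.e m) := by
      intro hp
      rcases S.nt x (S.e j) (S.e m) (S.e n) hp with h | h
      · exact S.zero_no₂ hm h
      · exact S.zero_no₁ hj h
    have h3 := (R.rep m j x).not.1 h1
    have h4 := (R.rep j m x).not.1 h2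
    linarith [not_lt.1 h3, not_lt.1 h4]

noncomputable def recStep (S : PrefSetup X A) (n : ℕ) (R : RecData S n) :
    RecData S (n+1) where
  V := Fin.snoc R.V (stepSpec S n R).choose
  cont := by
    intro m
    induction m using Fin.lastCases with
    | last => rw [Fin.snoc_last]; exact (stepSpec S n R).choose_spec.1
    | cast m' => rw [Fin.snoc_castSucc]; exact R.cont m'
  lb := by
    intro m x
    induction m using Fin.lastCases with
    | last => rw [Fin.snoc_last]; exact ((stepSpec S n R).choose_spec.2.1 x).1
    | cast m' => rw [Fin.snoc_castSucc]; exact R.lb m' x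
  ub := by
    intro m x
    induction m using Fin.lastCases with
    | last => rw [Fin.snoc_last]; exact ((stepSpec S n R).choose_spec.2.1 x).2
    | cast m' => rw [Fin.snoc_castSucc]; exact R.ub m' x
  rep := by
    intro m l x
    obtain ⟨hwc, hwb, hw⟩ := (stepSpec S n R).choose_spec
    induction m using Fin.lastCases with
    | last =>
      induction l using Fin.lastCases with
      | last =>
        rw [Fin.snoc_last]
        simp only [lt_self_iff_false, iff_false]
        exact fun hp => S.asy _ _ _ hp hp
      | cast l' =>
        rw [Fin.snoc_last, Fin.snoc_castSucc]
        simp only [Fin.val_last, Fin.coe_castSucc]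
        constructor
        · intro hp
          exact (hw l' x).2.2 ((S.neg_iff _ _ _).2 hp)
        · intro hlt
          rcases lt_trichotomy (S.D (S.e (l' : ℕ)) (S.e n) x) 0 with h | h | h
          · exact (S.neg_iff _ _ _).1 h
          · have := (hw l' x).2.1 h
            linarith
          · have := (hw l' x).1 h
            linarith
    | cast m' =>
      induction l using Fin.lastCases with
      | last =>
        rw [Fin.snoc_last, Fin.snoc_castSucc]
        simp only [Fin.val_last, Fin.coe_castSucc]
        constructor
        · intro hp
          exact (hw m' x).1 ((S.pos_iff _ _ _).2 hp)
        · intro hlt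
          rcases lt_trichotomy (S.D (S.e (m' : ℕ)) (S.e n) x) 0 with h | h | h
          · have := (hw m' x).2.2 h
            linarith
          · have := (hw m' x).2.1 h
            linarith
          · exact (S.pos_iff _ _ _).1 h
      | cast l' =>
        rw [Fin.snoc_castSucc, Fin.snoc_castSucc]
        simp only [Fin.coe_castSucc]
        exact R.rep m' l' x

noncomputable def recAll (S : PrefSetup X A) : (n : ℕ) → RecData S n
  | 0 => ⟨fun m => m.elim0, fun m => m.elim0, fun m => m.elim0, fun m => m.elim0,
      fun m => m.elim0⟩
  | n+1 => recStep S n (recAll S n)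

/-- the utility of the m-th element -/
noncomputable def Wfun (S : PrefSetup X A) (m : ℕ) : X → ℝ :=
  (recAll S (m+1)).V (Fin.last m)

lemma recAll_V_eq (S : PrefSetup X A) : ∀ n (m : Fin n), (recAll S n).V m = Wfun S m := by
  intro n
  induction n with
  | zero => exact fun m => m.elim0
  | succ n ih =>
    intro m
    induction m using Fin.lastCases with
    | last => rfl
    | cast m' =>
      have h1 : (recAll S (n+1)).V m'.castSucc = (recAll S n).V m' := by
        show (recStep S n (recAll S n)).V m'.castSucc = _
        simp only [recStep, Fin.snoc_castSucc]
      have h2 : ((m'.castSucc : Fin (n+1)) : ℕ) = (m' : ℕ) := Fin.coe_castSucc m'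
      rw [h1, ih m', h2]

lemma Wfun_cont (S : PrefSetup X A) (m : ℕ) : Continuous (Wfun S m) :=
  (recAll S (m+1)).cont _

lemma Wfun_rep (S : PrefSetup X A) (m l : ℕ) (x : X) :
    S.P x (S.e m) (S.e l) ↔ Wfun S m x < Wfun S l x := by
  have hm : m < max m l + 1 := by omega
  have hl : l < max m l + 1 := by omega
  have := (recAll S (max m l + 1)).rep ⟨m, hm⟩ ⟨l, hl⟩ x
  rw [recAll_V_eq, recAll_V_eq] at this
  exact this

end Recursion
end StmtAux

open StmtAux in
/-- A T1 space `X` is perfectly normal iff every parameter-dependent preference on a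
countable set of alternatives satisfying (Asy), (NT) and (CD) has a representation that
is continuous in the parameter. -/
theorem stmt2 {X : Type*} [TopologicalSpace X] [T1Space X] :
    PerfectlyNormalSpace X ↔
    ∀ (A : Type) (_ : Countable A) (P : X → A → A → Prop),
      (∀ x a b, P x a b → ¬ P x b a) →
      (∀ x a b c, P x a b → P x c b ∨ P x a c) →
      (∀ a b, IsOpen {x | P x a b}) →
      ∃ U : A × X → ℝ,
        (∀ x a b, P x a b ↔ U (a, x) < U (b, x)) ∧
        (∀ a, Continuous fun x => U (a, x)) := by
  constructor
  · -- forward direction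
    intro hPN A hcnt P hasy hnt hcd
    haveI := hcnt
    haveI := hPN
    by_cases hA : Nonempty A
    · haveI := hA
      obtain ⟨e, he⟩ := exists_surjective_nat A
      choose F hFc hF0 hF1 hFpos using fun (a b : A) =>
        exists_pos_on_open (X := X) (hcd a b)
      have hFzero : ∀ a b (x : X), ¬ P x a b → F a b x = 0 := by
        intro a b x hp
        rcases lt_or_eq_of_le (hF0 a b x) with h | h
        · exact absurd ((hFpos a b x).1 h) hp
        · exact h.symm
      set D : A → A → X → ℝ := fun a b x => F a b x - F b a x with hD_def
      have hDc : ∀ a b, Continuous (D a b) := fun a b => (hFc a b).sub (hFc b a)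
      have hpos : ∀ a b (x : X), 0 < D a b x ↔ P x a b := by
        intro a b x
        constructor
        · intro h
          have h1 : 0 < F a b x := by
            have := hF0 b a x
            simp only [hD_def] at h
            linarith
          exact (hFpos a b x).1 h1
        · intro hp
          have h1 : 0 < F a b x := (hFpos a b x).2 hp
          have h2 : F b a x = 0 := hFzero b a x (hasy x a b hp)
          simp only [hD_def]
          linarith
      have hneg : ∀ a b (x : X), D a b x < 0 ↔ P x b a := by
        intro a b x
        have h : D a b x = -(D b a x) := by simp only [hD_def]; ring
        rw [h, neg_lt_zero]
        exact hpos b a x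
      set S : PrefSetup X A :=
        ⟨P, e, D, hDc, hpos, hneg, hasy, hnt⟩ with hS_def
      set n0 : A → ℕ := fun a => (he a).choose with hn0_def
      have hn0e : ∀ a, e (n0 a) = a := fun a => (he a).choose_spec
      refine ⟨fun p => Wfun S (n0 p.1) p.2, ?_, fun a => Wfun_cont S (n0 a)⟩
      intro x a b
      have h1 := Wfun_rep S (n0 a) (n0 b) x
      have hSe : S.e = e := rfl
      have hSP : S.P = P := rfl
      rw [hSe, hSP, hn0e, hn0e] at h1
      exact h1
    · refine ⟨fun _ => 0, ?_, fun a => continuous_const⟩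
      intro x a b
      exact absurd ⟨a⟩ hA
  · -- backward direction
    intro hrep
    have key : ∀ C : Set X, IsClosed C → ∃ u : X → ℝ, Continuous u ∧ (∀ x, 0 ≤ u x) ∧
        (∀ x, u x = 0 ↔ x ∈ C) := by
      intro C hC
      set P : X → Bool → Bool → Prop := fun x a b => a = false ∧ b = true ∧ x ∉ C with hP_def
      have hasy : ∀ x a b, P x a b → ¬ P x b a := by
        rintro x a b ⟨rfl, rfl, h⟩ ⟨h1, h2, h3⟩
        simp at h2
      have hnt : ∀ x a b c, P x a b → P x c b ∨ P x a c := by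
        rintro x a b c ⟨rfl, rfl, h⟩
        cases c
        · left; exact ⟨rfl, rfl, h⟩
        · right; exact ⟨rfl, rfl, h⟩
      have hcd : ∀ a b, IsOpen {x | P x a b} := by
        intro a b
        cases a
        · cases b
          · have : {x | P x false false} = ∅ := by ext x; simp [hP_def]
            rw [this]; exact isOpen_empty
          · have : {x | P x false true} = Cᶜ := by ext x; simp [hP_def]
            rw [this]; exact hC.isOpen_compl
        · have : {x | P x true b} = ∅ := by ext x; simp [hP_def]
          rw [this]; exact isOpen_empty
      obtain ⟨U, hUrep, hUcont⟩ := hrep Bool inferInstance P hasy hnt hcd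
      have hge : ∀ x : X, U (false, x) ≤ U (true, x) := by
        intro x
        have h1 : ¬ P x true false := by simp [hP_def]
        rw [hUrep x true false] at h1
        linarith [not_lt.1 h1]
      refine ⟨fun x => U (true, x) - U (false, x),
        (hUcont true).sub (hUcont false),
        fun x => by show (0:ℝ) ≤ U (true, x) - U (false, x); linarith [hge x], ?_⟩
      intro x
      show (U (true, x) - U (false, x) = 0) ↔ x ∈ C
      constructor
      · intro h0
        by_contra hx
        have hp : P x false true := ⟨rfl, rfl, hx⟩
        have := (hUrep x false true).1 hp
        linarith
      · intro hx
        have hp : ¬ P x false true := by simp [hP_def, hx]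
        rw [hUrep x false true] at hp
        have := not_lt.1 hp
        linarith [hge x]
    have hnorm : NormalSpace X := by
      constructor
      intro s t hs ht hd
      obtain ⟨us, hucs, hus0, husz⟩ := key s hs
      obtain ⟨ut, hutc, hut0, hutz⟩ := key t ht
      refine ⟨{x | us x < ut x}, {x | ut x < us x}, isOpen_lt hucs hutc,
        isOpen_lt hutc hucs, ?_, ?_, ?_⟩
      · intro x hx
        have h1 : us x = 0 := (husz x).2 hx
        have h2 : x ∉ t := disjoint_left.1 hd hx
        have h3 : ut x ≠ 0 := fun h => h2 ((hutz x).1 h)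
        have h4 : 0 < ut x := lt_of_le_of_ne (hut0 x) (Ne.symm h3)
        show us x < ut x
        rw [h1]; exact h4
      · intro x hx
        have h1 : ut x = 0 := (hutz x).2 hx
        have h2 : x ∉ s := disjoint_right.1 hd hx
        have h3 : us x ≠ 0 := fun h => h2 ((husz x).1 h)
        have h4 : 0 < us x := lt_of_le_of_ne (hus0 x) (Ne.symm h3)
        show ut x < us x
        rw [h1]; exact h4
      · rw [Set.disjoint_left]
        intro x h1 h2
        have h1' : us x < ut x := h1
        have h2' : ut x < us x := h2
        linarith
    refine { toNormalSpace := hnorm, closed_gdelta := ?_ }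
    intro C hC
    obtain ⟨u, huc, hu0, huz⟩ := key C hC
    have hCeq : C = ⋂ n : ℕ, {x | u x < 1/(n+1)} := by
      ext x
      simp only [mem_iInter, mem_setOf_eq]
      constructor
      · intro hx n
        rw [(huz x).2 hx]
        positivity
      · intro h
        apply (huz x).1
        by_contra h0
        have hpos : 0 < u x := lt_of_le_of_ne (hu0 x) (Ne.symm h0)
        obtain ⟨n, hn⟩ := exists_nat_one_div_lt hpos
        exact absurd (h n) (not_lt.2 hn.le)
    rw [hCeq]
    exact IsGδ.iInter fun n => (isOpen_lt huc continuous_const).isGδ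

end StmtAuxSection
end

section
/- Let A be a countable set with the discrete topology, let X be a perfectly normal T1 topological space, and let (≺_x)_{x∈X} be a parameter-dependent preference on A over X. Then (≺_x)_{x∈X} satisfies axioms (Asy), (NT) and (CD) if and only if there exists a representation U : A × X → ℝ of the preference that is jointly continuous on A × X with the product topology. -/
open Set Filter Topology



lemma aux_cozero {X : Type*} [TopologicalSpace X] [PerfectlyNormalSpace X] {O : Set X}
    (hO : IsOpen O) :
    ∃ f : X → ℝ, Continuous f ∧ (∀ x, 0 ≤ f x) ∧ (∀ x, f x ≤ 1) ∧ ∀ x, (0 < f x ↔ x ∈ O) := by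
  classical
  have hC : IsClosed Oᶜ := hO.isClosed_compl
  obtain ⟨T, Topen, Tcount, TInt⟩ := PerfectlyNormalSpace.closed_gdelta hC
  rcases T.eq_empty_or_nonempty with rfl | Tne
  · rw [sInter_empty] at TInt
    have hOe : O = ∅ := by
      rw [← compl_univ, ← TInt, compl_compl]
    exact ⟨fun _ => 0, continuous_const, fun _ => le_rfl, fun _ => zero_le_one,
      fun x => by simp [hOe]⟩
  · obtain ⟨g, hg⟩ := Tcount.exists_surjective Tne
    have hsub : ∀ n : ℕ, Oᶜ ⊆ (g n : Set X) := by
      intro n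
      rw [TInt]
      exact sInter_subset_of_mem (g n).2
    have hgopen : ∀ n : ℕ, IsOpen (g n : Set X) := fun n => Topen _ (g n).2
    have hf : ∀ n : ℕ, ∃ f : C(X, ℝ), EqOn f 0 Oᶜ ∧ EqOn f 1 ((g n : Set X))ᶜ ∧
        ∀ x, f x ∈ Icc (0:ℝ) 1 := by
      intro n
      exact exists_continuous_zero_one_of_isClosed hC (hgopen n).isClosed_compl
        (by rw [disjoint_compl_right_iff_subset]; exact hsub n)
    choose f hf0 hf1 hf01 using hf
    set F : X → ℝ := fun x => ∑' n : ℕ, (1/2 : ℝ)^n * f n x with hFdef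
    have hb : ∀ n x, ‖(1/2 : ℝ)^n * f n x‖ ≤ (1/2:ℝ)^n := by
      intro n x
      rw [norm_mul, Real.norm_eq_abs, Real.norm_eq_abs,
        abs_of_pos (pow_pos (by norm_num : (0:ℝ) < 1/2) n),
        abs_of_nonneg (hf01 n x).1]
      have h2 := (hf01 n x).2
      nlinarith [pow_pos (by norm_num : (0:ℝ) < 1/2) n]
    have hsum : Summable (fun n : ℕ => (1/2:ℝ)^n) := summable_geometric_two
    have hFc : Continuous F :=
      continuous_tsum (fun n => (continuous_const.mul (f n).continuous)) hsum hb
    have hsx : ∀ x, Summable (fun n : ℕ => (1/2:ℝ)^n * f n x) := fun x =>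
      hsum.of_norm_bounded (fun n => hb n x)
    have hterm_nonneg : ∀ x n, 0 ≤ (1/2:ℝ)^n * f n x := fun x n =>
      mul_nonneg (by positivity) (hf01 n x).1
    have hF0 : ∀ x, 0 ≤ F x := fun x => tsum_nonneg (hterm_nonneg x)
    have hFpos : ∀ x, 0 < F x ↔ x ∈ O := by
      intro x
      constructor
      · intro hpos
        by_contra hxO
        have hxc : x ∈ Oᶜ := hxO
        have hz : ∀ n : ℕ, (1/2:ℝ)^n * f n x = 0 := fun n => by
          have h0 : (f n) x = 0 := by simpa using hf0 n hxc
          rw [h0, mul_zero]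
        have : F x = 0 := by
          rw [hFdef]
          simp only
          rw [tsum_congr hz, tsum_zero]
        rw [this] at hpos
        exact lt_irrefl _ hpos
      · intro hxO
        have hxnc : x ∉ ⋂₀ T := by
          rw [← TInt]
          exact fun h => h hxO
        obtain ⟨t, htT, hxt⟩ := by
          simpa [Set.mem_sInter] using hxnc
        obtain ⟨n, hn⟩ := hg ⟨t, htT⟩
        have hfn1 : f n x = 1 := by
          have : x ∈ ((g n : Set X))ᶜ := by
            rw [hn]
            exact hxt
          have := hf1 n this
          simpa using this
        have hle : (1/2:ℝ)^n * f n x ≤ F x :=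
          Summable.le_tsum (hsx x) n (fun m _ => hterm_nonneg x m)
        rw [hfn1, mul_one] at hle
        exact lt_of_lt_of_le (pow_pos (by norm_num) n) hle
    refine ⟨fun x => min 1 (F x), continuous_const.min hFc, fun x => ?_, fun x => min_le_left _ _,
      fun x => ?_⟩
    · exact le_min zero_le_one (hF0 x)
    · rw [lt_min_iff]
      simp only [zero_lt_one, true_and]
      exact hFpos x

lemma aux_discrete_cont {A X Y : Type*} [TopologicalSpace A] [DiscreteTopology A]
    [TopologicalSpace X] [TopologicalSpace Y] {U : A × X → Y}
    (h : ∀ a, Continuous fun x => U (a, x)) : Continuous U := by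
  rw [continuous_iff_continuousAt]
  rintro ⟨a, x⟩
  unfold ContinuousAt
  rw [nhds_prod_eq, nhds_discrete, Filter.pure_prod, Filter.tendsto_map'_iff]
  exact (h a).continuousAt



lemma aux_step {A X : Type*} [TopologicalSpace X] [PerfectlyNormalSpace X]
    (P : X → A → A → Prop)
    (hAsy : ∀ x a b, P x a b → ¬ P x b a)
    (hNT : ∀ x a b c, P x a b → P x c b ∨ P x a c)
    (hCD : ∀ a b, IsOpen {x | P x a b})
    (S : Finset A) (b : A) (u : A → X → ℝ)
    (hu : ∀ a ∈ S, Continuous (u a))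
    (hrep : ∀ x, ∀ a ∈ S, ∀ c ∈ S, (P x a c ↔ u a x < u c x)) :
    ∃ h : X → ℝ, Continuous h ∧ ∀ x, ∀ a ∈ S,
      (P x a b ↔ u a x < h x) ∧ (P x b a ↔ h x < u a x) := by
  classical
  -- cozero witnesses
  have hpq : ∀ a : A, ∃ f : X → ℝ, Continuous f ∧ (∀ x, 0 ≤ f x) ∧ (∀ x, f x ≤ 1) ∧
      ∀ x, (0 < f x ↔ P x a b) := by
    intro a
    obtain ⟨f, h1, h2, h3, h4⟩ := aux_cozero (hCD a b)
    exact ⟨f, h1, h2, h3, fun x => h4 x⟩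
  choose p hpc hp0 hp1 hpch using hpq
  have hqq : ∀ a : A, ∃ f : X → ℝ, Continuous f ∧ (∀ x, 0 ≤ f x) ∧ (∀ x, f x ≤ 1) ∧
      ∀ x, (0 < f x ↔ P x b a) := by
    intro a
    obtain ⟨f, h1, h2, h3, h4⟩ := aux_cozero (hCD b a)
    exact ⟨f, h1, h2, h3, fun x => h4 x⟩
  choose q hqc hq0 hq1 hqch using hqq
  -- derived functions
  set Pt : A → X → ℝ := fun a x =>
    p a x * ∏ j ∈ S.erase a, min 1 (max ((u j x - u a x)/2) (p j x)) with hPtdef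
  set Qt : A → X → ℝ := fun a x =>
    q a x * ∏ j ∈ S.erase a, min 1 (max ((u a x - u j x)/2) (q j x)) with hQtdef
  set w : A → A → X → ℝ := fun a e x =>
    max 0 (u a x + Pt a x - (u e x - Qt e x)) with hwdef
  set m : A → A → X → ℝ := fun a e x => w a e x * (Qt a x / (Qt a x + Pt e x)) with hmdef
  set lam : A → X → ℝ := fun a x => ∑ e ∈ S, m a e x with hlamdef
  -- zero-one facts about p, q
  have hpz : ∀ x a, ¬ P x a b → p a x = 0 := by
    intro x a h
    have := hpch a x
    have h0 := hp0 a x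
    rcases lt_or_eq_of_le h0 with h' | h'
    · exact absurd (this.mp h') h
    · exact h'.symm
  have hqz : ∀ x a, ¬ P x b a → q a x = 0 := by
    intro x a h
    have := hqch a x
    have h0 := hq0 a x
    rcases lt_or_eq_of_le h0 with h' | h'
    · exact absurd (this.mp h') h
    · exact h'.symm
  -- factor bounds
  have hfac01 : ∀ (z : ℝ), 0 ≤ z → 0 ≤ min 1 z ∧ min 1 z ≤ 1 :=
    fun z hz => ⟨le_min zero_le_one hz, min_le_left _ _⟩
  have hPt0 : ∀ a x, 0 ≤ Pt a x := by
    intro a x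
    apply mul_nonneg (hp0 a x)
    apply Finset.prod_nonneg
    intro j _
    exact (hfac01 _ (le_max_of_le_right (hp0 j x))).1
  have hQt0 : ∀ a x, 0 ≤ Qt a x := by
    intro a x
    apply mul_nonneg (hq0 a x)
    apply Finset.prod_nonneg
    intro j _
    exact (hfac01 _ (le_max_of_le_right (hq0 j x))).1
  have hPtz : ∀ x a, ¬ P x a b → Pt a x = 0 := by
    intro x a h
    rw [hPtdef]
    simp only
    rw [hpz x a h, zero_mul]
  have hQtz : ∀ x a, ¬ P x b a → Qt a x = 0 := by
    intro x a h
    rw [hQtdef]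
    simp only
    rw [hqz x a h, zero_mul]
  -- F1 : positivity
  have hF1 : ∀ x a, a ∈ S → P x a b → 0 < Pt a x := by
    intro x a ha hab
    apply mul_pos ((hpch a x).mpr hab)
    apply Finset.prod_pos
    intro j hj
    have hjS : j ∈ S := Finset.mem_of_mem_erase hj
    apply lt_min one_pos
    by_cases hjb : P x j b
    · exact lt_max_of_lt_right ((hpch j x).mpr hjb)
    · have haj : P x a j := (hNT x a b j hab).resolve_left hjb
      have : u a x < u j x := (hrep x a ha j hjS).mp haj
      apply lt_max_of_lt_left
      linarith
  have hF2 : ∀ x a, a ∈ S → P x b a → 0 < Qt a x := by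
    intro x a ha hba
    apply mul_pos ((hqch a x).mpr hba)
    apply Finset.prod_pos
    intro j hj
    have hjS : j ∈ S := Finset.mem_of_mem_erase hj
    apply lt_min one_pos
    by_cases hbj : P x b j
    · exact lt_max_of_lt_right ((hqch j x).mpr hbj)
    · have hja : P x j a := (hNT x b a j hba).resolve_right hbj
      have : u j x < u a x := (hrep x j hjS a ha).mp hja
      apply lt_max_of_lt_left
      linarith
  -- product is at most one given factor
  have prod_le_fac : ∀ (f : A → ℝ) (t : Finset A) (e : A), e ∈ t →
      (∀ j ∈ t, 0 ≤ f j ∧ f j ≤ 1) → ∏ j ∈ t, f j ≤ f e := by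
    intro f t e he hb01
    rw [← Finset.mul_prod_erase t f he]
    have h1 : ∏ j ∈ t.erase e, f j ≤ 1 :=
      Finset.prod_le_one (fun j hj => (hb01 j (Finset.mem_of_mem_erase hj)).1)
        (fun j hj => (hb01 j (Finset.mem_of_mem_erase hj)).2)
    have h2 : 0 ≤ f e := (hb01 e he).1
    calc f e * ∏ j ∈ t.erase e, f j ≤ f e * 1 := by
          apply mul_le_mul_of_nonneg_left h1 h2
      _ = f e := mul_one _
  have hPtle : ∀ x a e, e ∈ S.erase a →
      Pt a x ≤ min 1 (max ((u e x - u a x)/2) (p e x)) := by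
    intro x a e he
    rw [hPtdef]
    simp only
    calc p a x * ∏ j ∈ S.erase a, min 1 (max ((u j x - u a x)/2) (p j x))
        ≤ 1 * ∏ j ∈ S.erase a, min 1 (max ((u j x - u a x)/2) (p j x)) := by
          apply mul_le_mul_of_nonneg_right (hp1 a x)
          exact Finset.prod_nonneg (fun j _ => (hfac01 _ (le_max_of_le_right (hp0 j x))).1)
      _ = ∏ j ∈ S.erase a, min 1 (max ((u j x - u a x)/2) (p j x)) := one_mul _
      _ ≤ min 1 (max ((u e x - u a x)/2) (p e x)) := by
          apply prod_le_fac _ _ _ he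
          intro j _
          exact hfac01 _ (le_max_of_le_right (hp0 j x))
  have hQtle : ∀ x a e, e ∈ S.erase a →
      Qt a x ≤ min 1 (max ((u a x - u e x)/2) (q e x)) := by
    intro x a e he
    rw [hQtdef]
    simp only
    calc q a x * ∏ j ∈ S.erase a, min 1 (max ((u a x - u j x)/2) (q j x))
        ≤ 1 * ∏ j ∈ S.erase a, min 1 (max ((u a x - u j x)/2) (q j x)) := by
          apply mul_le_mul_of_nonneg_right (hq1 a x)
          exact Finset.prod_nonneg (fun j _ => (hfac01 _ (le_max_of_le_right (hq0 j x))).1)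
      _ = ∏ j ∈ S.erase a, min 1 (max ((u a x - u j x)/2) (q j x)) := one_mul _
      _ ≤ min 1 (max ((u a x - u e x)/2) (q e x)) := by
          apply prod_le_fac _ _ _ he
          intro j _
          exact hfac01 _ (le_max_of_le_right (hq0 j x))
  -- the key consistency inequality
  have key : ∀ x a e, a ∈ S → e ∈ S → Qt a x = 0 → Pt e x = 0 →
      u a x + Pt a x ≤ u e x - Qt e x := by
    intro x a e ha he hQa hPe
    have hnba : ¬ P x b a := fun h => absurd hQa (hF2 x a ha h).ne'
    have hneb : ¬ P x e b := fun h => absurd hPe (hF1 x e he h).ne'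
    have hqa0 : q a x = 0 := hqz x a hnba
    have hpe0 : p e x = 0 := hpz x e hneb
    by_cases hab : P x a b
    · have hae : P x a e := (hNT x a b e hab).resolve_left hneb
      have hane : a ≠ e := by
        intro hh
        rw [hh] at hae
        exact hAsy x e e hae hae
      have hue : u a x < u e x := (hrep x a ha e he).mp hae
      have hPa : Pt a x ≤ (u e x - u a x)/2 := by
        have h1 := hPtle x a e (Finset.mem_erase.mpr ⟨Ne.symm hane, he⟩)
        have h2 : max ((u e x - u a x)/2) (p e x) = (u e x - u a x)/2 := by
          rw [hpe0]
          exact max_eq_left (by linarith)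
        rw [h2] at h1
        exact le_trans h1 (min_le_right _ _)
      by_cases hbe : P x b e
      · have hQe : Qt e x ≤ (u e x - u a x)/2 := by
          have h1 := hQtle x e a (Finset.mem_erase.mpr ⟨hane, ha⟩)
          have h2 : max ((u e x - u a x)/2) (q a x) = (u e x - u a x)/2 := by
            rw [hqa0]
            exact max_eq_left (by linarith)
          rw [h2] at h1
          exact le_trans h1 (min_le_right _ _)
        linarith
      · have hQe : Qt e x = 0 := hQtz x e hbe
        rw [hQe]
        linarith
    · have hPa : Pt a x = 0 := hPtz x a hab
      by_cases hbe : P x b e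
      · have hae : P x a e := (hNT x b e a hbe).resolve_right hnba
        have hane : a ≠ e := by
          intro hh
          rw [hh] at hae
          exact hAsy x e e hae hae
        have hue : u a x < u e x := (hrep x a ha e he).mp hae
        have hQe : Qt e x ≤ (u e x - u a x)/2 := by
          have h1 := hQtle x e a (Finset.mem_erase.mpr ⟨hane, ha⟩)
          have h2 : max ((u e x - u a x)/2) (q a x) = (u e x - u a x)/2 := by
            rw [hqa0]
            exact max_eq_left (by linarith)
          rw [h2] at h1
          exact le_trans h1 (min_le_right _ _)
        rw [hPa]
        linarith
      · have hQe : Qt e x = 0 := hQtz x e hbe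
        have hnea : ¬ P x e a := by
          intro hea
          rcases hNT x e a b hea with h | h
          · exact hnba h
          · exact hneb h
        have : ¬ (u e x < u a x) := fun hh => hnea ((hrep x e he a ha).mpr hh)
        rw [hPa, hQe]
        linarith [not_lt.mp this]
  -- basic facts about m and lam
  have hw0 : ∀ x a e, 0 ≤ w a e x := fun x a e => le_max_left _ _
  have hm0 : ∀ x a e, 0 ≤ m a e x := by
    intro x a e
    apply mul_nonneg (hw0 x a e)
    exact div_nonneg (hQt0 a x) (add_nonneg (hQt0 a x) (hPt0 e x))
  have hmlew : ∀ x a e, m a e x ≤ w a e x := by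
    intro x a e
    rw [hmdef]
    simp only
    by_cases hD : Qt a x + Pt e x = 0
    · have : Qt a x = 0 := le_antisymm (by nlinarith [hQt0 a x, hPt0 e x]) (hQt0 a x)
      rw [this, zero_div, mul_zero]
      exact hw0 x a e
    · have hDpos : 0 < Qt a x + Pt e x :=
        lt_of_le_of_ne (add_nonneg (hQt0 a x) (hPt0 e x)) (Ne.symm hD)
      have : Qt a x / (Qt a x + Pt e x) ≤ 1 := by
        rw [div_le_one hDpos]
        linarith [hPt0 e x]
      nlinarith [hw0 x a e, div_nonneg (hQt0 a x) hDpos.le]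
  have hlam0 : ∀ x a, 0 ≤ lam a x := fun x a => Finset.sum_nonneg (fun e _ => hm0 x a e)
  have hlamz : ∀ x a, Qt a x = 0 → lam a x = 0 := by
    intro x a h
    rw [hlamdef]
    simp only
    apply Finset.sum_eq_zero
    intro e _
    rw [hmdef]
    simp only
    rw [h, zero_div, mul_zero]
  -- upper bound property
  have upper : ∀ x e, e ∈ S → Pt e x = 0 → ∀ a ∈ S,
      u a x + Pt a x - lam a x ≤ u e x - Qt e x := by
    intro x e he hPe a ha
    have hmle : m a e x ≤ lam a x := by
      rw [hlamdef]
      simp only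
      exact Finset.single_le_sum (fun i _ => hm0 x a i) he
    suffices h : u a x + Pt a x - m a e x ≤ u e x - Qt e x by linarith
    by_cases hle : u a x + Pt a x ≤ u e x - Qt e x
    · linarith [hm0 x a e]
    · push_neg at hle
      have hQa : Qt a x ≠ 0 := by
        intro h0
        exact absurd (key x a e ha he h0 hPe) (not_le.mpr hle)
      have hweq : w a e x = u a x + Pt a x - (u e x - Qt e x) := max_eq_right (by linarith)
      have hfrac : Qt a x / (Qt a x + Pt e x) = 1 := by
        rw [hPe, add_zero, div_self hQa]
      have hmeq : m a e x = u a x + Pt a x - (u e x - Qt e x) := by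
        rw [hmdef]
        simp only
        rw [hfrac, mul_one, hweq]
      linarith [hmeq]
  -- continuity of ingredients
  have hPtc : ∀ a ∈ S, Continuous (Pt a) := by
    intro a ha
    apply (hpc a).mul
    apply continuous_finset_prod
    intro j hj
    exact continuous_const.min
      ((((hu j (Finset.mem_of_mem_erase hj)).sub (hu a ha)).div_const 2).max (hpc j))
  have hQtc : ∀ a ∈ S, Continuous (Qt a) := by
    intro a ha
    apply (hqc a).mul
    apply continuous_finset_prod
    intro j hj
    exact continuous_const.min
      ((((hu a ha).sub (hu j (Finset.mem_of_mem_erase hj))).div_const 2).max (hqc j))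
  have hwc : ∀ a ∈ S, ∀ e ∈ S, Continuous (fun x => w a e x) := by
    intro a ha e he
    exact continuous_const.max
      (((hu a ha).add (hPtc a ha)).sub ((hu e he).sub (hQtc e he)))
  have hmc : ∀ a ∈ S, ∀ e ∈ S, Continuous (fun x => m a e x) := by
    intro a ha e he
    rw [continuous_iff_continuousAt]
    intro x0
    by_cases hD : Qt a x0 + Pt e x0 = 0
    · have hQa0 : Qt a x0 = 0 := le_antisymm (by nlinarith [hQt0 a x0, hPt0 e x0]) (hQt0 a x0)
      have hPe0 : Pt e x0 = 0 := le_antisymm (by nlinarith [hQt0 a x0, hPt0 e x0]) (hPt0 e x0)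
      have hw00 : w a e x0 = 0 := by
        have := key x0 a e ha he hQa0 hPe0
        exact max_eq_left (by linarith)
      have hm00 : m a e x0 = 0 := by
        rw [hmdef]
        simp only
        rw [hQa0, zero_div, mul_zero]
      have hwt : Tendsto (fun x => w a e x) (𝓝 x0) (𝓝 0) := by
        simpa [hw00] using (hwc a ha e he).tendsto x0
      have hmt : Tendsto (fun x => m a e x) (𝓝 x0) (𝓝 0) :=
        squeeze_zero (fun x => hm0 x a e) (fun x => hmlew x a e) hwt
      simpa [ContinuousAt, hm00] using hmt
    · exact ((hwc a ha e he).continuousAt).mul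
        ((((hQtc a ha).continuousAt).div (((hQtc a ha).add (hPtc e he)).continuousAt) hD))
  have hlamc : ∀ a ∈ S, Continuous (lam a) := by
    intro a ha
    apply continuous_finset_sum
    intro e he
    exact hmc a ha e he
  -- case split on S nonempty
  by_cases hS : S.Nonempty
  · refine ⟨fun x => S.sup' hS (fun a => u a x + Pt a x - lam a x), ?_, ?_⟩
    · apply Continuous.finset_sup'_apply hS
      intro a ha
      exact ((hu a ha).add (hPtc a ha)).sub (hlamc a ha)
    · intro x a ha
      have hcase1 : P x a b → u a x < S.sup' hS (fun a => u a x + Pt a x - lam a x) := by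
        intro hab
        have hQa : Qt a x = 0 := hQtz x a (hAsy x a b hab)
        have hlz : lam a x = 0 := hlamz x a hQa
        have hle : u a x + Pt a x - lam a x ≤ S.sup' hS (fun c => u c x + Pt c x - lam c x) :=
          Finset.le_sup' (fun c => u c x + Pt c x - lam c x) ha
        have := hF1 x a ha hab
        rw [hlz] at hle
        linarith
      have hcase2 : P x b a → S.sup' hS (fun a => u a x + Pt a x - lam a x) < u a x := by
        intro hba
        have hPa : Pt a x = 0 := hPtz x a (hAsy x b a hba)
        have hle : S.sup' hS (fun c => u c x + Pt c x - lam c x) ≤ u a x - Qt a x :=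
          Finset.sup'_le hS _ (fun c hc => upper x a ha hPa c hc)
        have := hF2 x a ha hba
        linarith
      have hcase3 : ¬ P x a b → ¬ P x b a →
          S.sup' hS (fun a => u a x + Pt a x - lam a x) = u a x := by
        intro h1 h2
        have hPa : Pt a x = 0 := hPtz x a h1
        have hQa : Qt a x = 0 := hQtz x a h2
        have hlz : lam a x = 0 := hlamz x a hQa
        apply le_antisymm
        · have hle : S.sup' hS (fun c => u c x + Pt c x - lam c x) ≤ u a x - Qt a x :=
            Finset.sup'_le hS _ (fun c hc => upper x a ha hPa c hc)
          rw [hQa] at hle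
          linarith
        · have hle : u a x + Pt a x - lam a x ≤ S.sup' hS (fun c => u c x + Pt c x - lam c x) :=
            Finset.le_sup' (fun c => u c x + Pt c x - lam c x) ha
          rw [hPa, hlz] at hle
          linarith
      constructor
      · constructor
        · exact hcase1
        · intro hlt
          by_cases h1 : P x a b
          · exact h1
          · by_cases h2 : P x b a
            · exact absurd hlt (not_lt.mpr (le_of_lt (hcase2 h2))).elim
            · have hlt' : u a x < S.sup' hS (fun c => u c x + Pt c x - lam c x) := hlt
              rw [hcase3 h1 h2] at hlt'
              exact absurd hlt' (lt_irrefl _)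
      · constructor
        · exact hcase2
        · intro hlt
          by_cases h2 : P x b a
          · exact h2
          · by_cases h1 : P x a b
            · exact absurd hlt (not_lt.mpr (le_of_lt (hcase1 h1)))
            · have hlt' : S.sup' hS (fun c => u c x + Pt c x - lam c x) < u a x := hlt
              rw [hcase3 h1 h2] at hlt'
              exact absurd hlt' (lt_irrefl _)
  · refine ⟨fun _ => 0, continuous_const, ?_⟩
    intro x a ha
    exact absurd ha (fun h => hS ⟨a, h⟩)



/-- The invariant carried along the recursion. -/
def auxQP {A X : Type*} [TopologicalSpace X] (P : X → A → A → Prop) (enc : A → ℕ)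
    (n : ℕ) (u : A → X → ℝ) : Prop :=
  (∀ a, enc a < n → Continuous (u a)) ∧
  ∀ x a c, enc a < n → enc c < n → (P x a c ↔ u a x < u c x)

/-- The recursively constructed sequence of partial representations. -/
noncomputable def auxChain {A X : Type*} [TopologicalSpace X] (P : X → A → A → Prop)
    (enc : A → ℕ)
    (step : ∀ n (u : A → X → ℝ), auxQP P enc n u →
      {u' : A → X → ℝ // auxQP P enc (n+1) u' ∧ ∀ a, enc a < n → u' a = u a}) :
    (n : ℕ) → {u : A → X → ℝ // auxQP P enc n u}
  | 0 => ⟨fun _ _ => 0,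
      ⟨fun a h => absurd h (Nat.not_lt_zero _), fun _ _ _ h => absurd h (Nat.not_lt_zero _)⟩⟩
  | (n+1) =>
      ⟨(step n (auxChain P enc step n).1 (auxChain P enc step n).2).1,
       (step n (auxChain P enc step n).1 (auxChain P enc step n).2).2.1⟩

lemma auxChain_succ {A X : Type*} [TopologicalSpace X] (P : X → A → A → Prop)
    (enc : A → ℕ)
    (step : ∀ n (u : A → X → ℝ), auxQP P enc n u →
      {u' : A → X → ℝ // auxQP P enc (n+1) u' ∧ ∀ a, enc a < n → u' a = u a})
    (n : ℕ) (a : A) (h : enc a < n) :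
    (auxChain P enc step (n+1)).1 a = (auxChain P enc step n).1 a := by
  have := (step n (auxChain P enc step n).1 (auxChain P enc step n).2).2.2 a h
  simpa [auxChain] using this

lemma auxChain_stable {A X : Type*} [TopologicalSpace X] (P : X → A → A → Prop)
    (enc : A → ℕ)
    (step : ∀ n (u : A → X → ℝ), auxQP P enc n u →
      {u' : A → X → ℝ // auxQP P enc (n+1) u' ∧ ∀ a, enc a < n → u' a = u a})
    (a : A) :
    ∀ n, enc a < n → (auxChain P enc step n).1 a = (auxChain P enc step (enc a + 1)).1 a := by
  intro n
  induction n with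
  | zero => intro h; exact absurd h (Nat.not_lt_zero _)
  | succ k ih =>
      intro h
      rcases Nat.lt_succ_iff_lt_or_eq.mp h with h' | h'
      · rw [auxChain_succ P enc step k a h']
        exact ih h'
      · rw [h']



/-- For countable discrete `A` and perfectly normal T1 `X`, the axioms (Asy), (NT) and
(CD) hold iff there is a jointly continuous representation on `A × X`. -/
theorem stmt7 {A X : Type*} [Countable A] [TopologicalSpace A] [DiscreteTopology A]
    [TopologicalSpace X] [T1Space X] [PerfectlyNormalSpace X]
    (P : X → A → A → Prop) :
    ((∀ x a b, P x a b → ¬ P x b a) ∧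
     (∀ x a b c, P x a b → P x c b ∨ P x a c) ∧
     (∀ a b, IsOpen {x | P x a b})) ↔
    ∃ U : A × X → ℝ,
      (∀ x a b, P x a b ↔ U (a, x) < U (b, x)) ∧ Continuous U := by
  classical
  constructor
  · rintro ⟨hAsy, hNT, hCD⟩
    obtain ⟨enc, henc⟩ := Countable.exists_injective_nat A
    -- the step of the recursion
    have hstep : ∀ n (u : A → X → ℝ), auxQP P enc n u →
        ∃ u' : A → X → ℝ, auxQP P enc (n+1) u' ∧ ∀ a, enc a < n → u' a = u a := by
      intro n u hu
      by_cases hb : ∃ b : A, enc b = n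
      · obtain ⟨b, hbn⟩ := hb
        have hfin : ({a : A | enc a < n}).Finite := by
          have : ({a : A | enc a < n}) = enc ⁻¹' (Iio n) := rfl
          rw [this]
          exact Set.Finite.preimage (henc.injOn) (finite_Iio n)
        set S : Finset A := hfin.toFinset with hSdef
        have hmem : ∀ a : A, a ∈ S ↔ enc a < n := by
          intro a
          rw [hSdef, Set.Finite.mem_toFinset]
          rfl
        obtain ⟨h, hc, hrep'⟩ := aux_step P hAsy hNT hCD S b u
          (fun a ha => hu.1 a ((hmem a).mp ha))
          (fun x a ha c hc => hu.2 x a c ((hmem a).mp ha) ((hmem c).mp hc))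
        refine ⟨Function.update u b h, ⟨?_, ?_⟩, ?_⟩
        · intro a ha
          by_cases hab : a = b
          · rw [hab, Function.update_self]
            exact hc
          · rw [Function.update_of_ne hab]
            apply hu.1
            have : enc a ≠ n := fun hh => hab (henc (hh.trans hbn.symm))
            omega
        · intro x a c ha hc'
          by_cases hab : a = b <;> by_cases hcb : c = b
          · subst hab; subst hcb
            rw [Function.update_self]
            constructor
            · intro hh; exact (hAsy _ _ _ hh hh).elim
            · intro hh; exact absurd hh (lt_irrefl _)
          · subst hab
            have hcS : c ∈ S := by
              rw [hmem]
              have : enc c ≠ n := fun hh => hcb (henc (hh.trans hbn.symm))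
              omega
            rw [Function.update_self, Function.update_of_ne hcb]
            exact (hrep' x c hcS).2
          · subst hcb
            have haS : a ∈ S := by
              rw [hmem]
              have : enc a ≠ n := fun hh => hab (henc (hh.trans hbn.symm))
              omega
            rw [Function.update_self, Function.update_of_ne hab]
            exact (hrep' x a haS).1
          · rw [Function.update_of_ne hab, Function.update_of_ne hcb]
            have ha' : enc a ≠ n := fun hh => hab (henc (hh.trans hbn.symm))
            have hc'' : enc c ≠ n := fun hh => hcb (henc (hh.trans hbn.symm))
            exact hu.2 x a c (by omega) (by omega)
        · intro a ha
          have : a ≠ b := fun hh => by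
            rw [hh] at ha
            omega
          exact Function.update_of_ne this _ _
      · push_neg at hb
        refine ⟨u, ⟨?_, ?_⟩, fun a _ => rfl⟩
        · intro a ha
          exact hu.1 a (by have := hb a; omega)
        · intro x a c ha hc
          exact hu.2 x a c (by have := hb a; omega) (by have := hb c; omega)
    -- turn it into data
    set stepF : ∀ n (u : A → X → ℝ), auxQP P enc n u →
        {u' : A → X → ℝ // auxQP P enc (n+1) u' ∧ ∀ a, enc a < n → u' a = u a} :=
      fun n u h => ⟨(hstep n u h).choose, (hstep n u h).choose_spec⟩ with hstepF
    set V : A → X → ℝ := fun a => (auxChain P enc stepF (enc a + 1)).1 a with hV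
    have hVc : ∀ a, Continuous (V a) := by
      intro a
      exact (auxChain P enc stepF (enc a + 1)).2.1 a (Nat.lt_succ_self _)
    have hVrep : ∀ x a c, P x a c ↔ V a x < V c x := by
      intro x a c
      set N := max (enc a) (enc c) + 1 with hN
      have ha : enc a < N := by omega
      have hc : enc c < N := by omega
      have h1 := auxChain_stable P enc stepF a N ha
      have h2 := auxChain_stable P enc stepF c N hc
      have := (auxChain P enc stepF N).2.2 x a c ha hc
      rw [h1, h2] at this
      exact this
    refine ⟨fun z => V z.1 z.2, fun x a b => hVrep x a b, ?_⟩
    exact aux_discrete_cont (fun a => hVc a)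
  · rintro ⟨U, hrep, hUc⟩
    have hcont : ∀ a : A, Continuous fun x : X => U (a, x) := by
      intro a
      exact hUc.comp (Continuous.prodMk_right a)
    refine ⟨?_, ?_, ?_⟩
    · intro x a b h
      rw [hrep] at h ⊢
      exact not_lt.mpr (le_of_lt h)
    · intro x a b c h
      rw [hrep] at h
      rcases lt_or_ge (U (c, x)) (U (b, x)) with h' | h'
      · left; rw [hrep]; exact h'
      · right; rw [hrep]; exact lt_of_lt_of_le h h'
    · intro a b
      have : {x | P x a b} = {x | U (a, x) < U (b, x)} := by
        ext x
        exact hrep x a b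
      rw [this]
      exact isOpen_lt (hcont a) (hcont b)
end

section
/- Let Θ be a perfectly normal T1 topological space and let n be a positive integer. Then the product ℝⁿ₊₊ × Θ, where ℝⁿ₊₊ = {p ∈ ℝⁿ : p_i > 0 for all i} carries the Euclidean subspace topology and the product carries the product topology, is perfectly normal. -/
open Set Topology Metric

/-- A space in which every closed set is the zero set of a continuous real-valued
function is perfectly normal. -/
theorem aux_pn_of_zero {X : Type*} [TopologicalSpace X]
    (h : ∀ F : Set X, IsClosed F → ∃ f : X → ℝ, Continuous f ∧ F = f ⁻¹' {0}) :
    PerfectlyNormalSpace X := by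
  have hnorm : NormalSpace X := by
    refine ⟨fun s t hs ht hd => ?_⟩
    obtain ⟨f, hf, hfs⟩ := h s hs
    obtain ⟨g, hg, hgt⟩ := h t ht
    set F : X → ℝ := fun x => |f x| with hF
    set G : X → ℝ := fun x => |g x| with hG
    have hFc : Continuous F := hf.abs
    have hGc : Continuous G := hg.abs
    have hpos : ∀ x, 0 < F x + G x := by
      intro x
      rcases lt_or_eq_of_le (add_nonneg (abs_nonneg (f x)) (abs_nonneg (g x))) with h' | h'
      · exact h'
      · exfalso
        have hfx : f x = 0 := by
          have := abs_nonneg (f x)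
          have := abs_nonneg (g x)
          have : |f x| = 0 := by linarith [abs_nonneg (f x), abs_nonneg (g x)]
          simpa [abs_eq_zero] using this
        have hgx : g x = 0 := by
          have : |g x| = 0 := by linarith [abs_nonneg (f x), abs_nonneg (g x)]
          simpa [abs_eq_zero] using this
        have hxs : x ∈ s := by rw [hfs]; simpa using hfx
        have hxt : x ∈ t := by rw [hgt]; simpa using hgx
        exact absurd (hd.ne_of_mem hxs hxt) (by simp)
    set q : X → ℝ := fun x => F x / (F x + G x) with hq
    have hqc : Continuous q := hFc.div (hFc.add hGc) fun x => (hpos x).ne'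
    refine ⟨q ⁻¹' Iio (1/2 : ℝ), q ⁻¹' Ioi (1/2 : ℝ), hqc.isOpen_preimage _ isOpen_Iio,
      hqc.isOpen_preimage _ isOpen_Ioi, ?_, ?_, ?_⟩
    · intro x hx
      have hfx : f x = 0 := by
        have : x ∈ f ⁻¹' {0} := hfs ▸ hx
        simpa using this
      have : q x = 0 := by simp [hq, hF, hfx]
      simp [this]
    · intro x hx
      have hgx : g x = 0 := by
        have : x ∈ g ⁻¹' {0} := hgt ▸ hx
        simpa using this
      have hxns : x ∉ s := fun hxs => absurd (hd.ne_of_mem hxs hx) (by simp)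
      have hfx : f x ≠ 0 := by
        intro h0
        exact hxns (by rw [hfs]; simpa using h0)
      have hFx : 0 < F x := abs_pos.mpr hfx
      have : q x = 1 := by
        rw [hq]
        simp only [hG, hgx, abs_zero, add_zero]
        exact div_self hFx.ne'
      simp only [mem_preimage, mem_Ioi, this]
      norm_num
    · rw [disjoint_left]
      intro x hx hx'
      simp only [mem_preimage, mem_Iio, mem_Ioi] at hx hx'
      linarith
  refine ⟨fun F hF => ?_⟩
  obtain ⟨f, hf, hfF⟩ := h F hF
  rw [hfF]
  have heq : f ⁻¹' {0} = ⋂ n : ℕ, f ⁻¹' (Ioo (-(1/(n+1) : ℝ)) (1/(n+1))) := by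
    ext x
    simp only [mem_preimage, mem_singleton_iff, mem_iInter, mem_Ioo]
    constructor
    · intro h0 n
      rw [h0]
      constructor
      · have : (0:ℝ) < 1/(n+1) := by positivity
        linarith
      · positivity
    · intro hh
      by_contra h0
      obtain ⟨n, hn⟩ := exists_nat_one_div_lt (abs_pos.mpr h0)
      obtain ⟨h1, h2⟩ := hh n
      have : |f x| < 1/(n+1) := abs_lt.mpr ⟨h1, h2⟩
      linarith
  rw [heq]
  exact IsGδ.iInter_of_isOpen fun n => isOpen_Ioo.preimage hf

/-- In a perfectly normal space, every closed set is the zero set of a continuous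
real-valued function. -/
theorem aux_zero_of_pn {X : Type*} [TopologicalSpace X] [PerfectlyNormalSpace X]
    (F : Set X) (hF : IsClosed F) : ∃ f : X → ℝ, Continuous f ∧ F = f ⁻¹' {0} := by
  obtain ⟨T, hTopen, hTcount, hTeq⟩ := PerfectlyNormalSpace.closed_gdelta hF
  rcases T.eq_empty_or_nonempty with rfl | hTne
  · refine ⟨fun _ => 0, continuous_const, ?_⟩
    rw [hTeq]
    simp
  obtain ⟨e, he⟩ := hTcount.exists_surjective hTne
  have hFsub : ∀ n : ℕ, F ⊆ (e n : Set X) := fun n => by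
    rw [hTeq]; exact sInter_subset_of_mem (e n).2
  have hclosed : ∀ n : ℕ, IsClosed ((e n : Set X)ᶜ) :=
    fun n => (hTopen _ (e n).2).isClosed_compl
  have hdisj : ∀ n : ℕ, Disjoint F ((e n : Set X)ᶜ) :=
    fun n => disjoint_compl_right.mono_left (hFsub n)
  choose g hg0 hg1 hg01 using fun n : ℕ =>
    exists_continuous_zero_one_of_isClosed hF (hclosed n) (hdisj n)
  set φ : ℕ → X → ℝ := fun n x => (1/2 : ℝ) ^ n * g n x with hφ
  have hφnonneg : ∀ n x, 0 ≤ φ n x := fun n x =>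
    mul_nonneg (by positivity) (hg01 n x).1
  have hφle : ∀ n x, ‖φ n x‖ ≤ (1/2 : ℝ) ^ n := by
    intro n x
    rw [Real.norm_eq_abs, abs_of_nonneg (hφnonneg n x)]
    calc (1/2 : ℝ) ^ n * g n x ≤ (1/2 : ℝ) ^ n * 1 := by
          exact mul_le_mul_of_nonneg_left (hg01 n x).2 (by positivity)
      _ = (1/2 : ℝ) ^ n := mul_one _
  have hu : Summable (fun n : ℕ => (1/2 : ℝ) ^ n) :=
    summable_geometric_of_lt_one (by norm_num) (by norm_num)
  have hsum : ∀ x, Summable fun n => φ n x := fun x =>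
    Summable.of_nonneg_of_le (fun n => hφnonneg n x)
      (fun n => (le_abs_self _).trans ((Real.norm_eq_abs _) ▸ hφle n x)) hu
  have hcont : Continuous fun x => ∑' n, φ n x :=
    continuous_tsum (fun n => continuous_const.mul (g n).continuous) hu hφle
  refine ⟨fun x => ∑' n, φ n x, hcont, ?_⟩
  ext x
  simp only [mem_preimage, mem_singleton_iff]
  constructor
  · intro hx
    have hzero : ∀ n, φ n x = 0 := fun n => by
      simp [hφ, hg0 n hx]
    calc ∑' n, φ n x = ∑' _ : ℕ, (0:ℝ) := tsum_congr hzero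
      _ = 0 := tsum_zero
  · intro hx
    by_contra hxF
    have hxn : ∃ n, x ∉ (e n : Set X) := by
      have : x ∉ ⋂₀ T := fun hmem => hxF (hTeq ▸ hmem)
      rw [mem_sInter] at this
      push_neg at this
      obtain ⟨t, htT, hxt⟩ := this
      obtain ⟨n, hn⟩ := he ⟨t, htT⟩
      exact ⟨n, by rw [hn]; exact hxt⟩
    obtain ⟨n, hn⟩ := hxn
    have hgn : g n x = 1 := hg1 n hn
    have : φ n x ≤ ∑' m, φ m x := Summable.le_tsum (hsum x) n fun m _ => hφnonneg m x
    rw [hx] at this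
    have : (0:ℝ) < φ n x := by
      rw [hφ]
      simp only [hgn, mul_one]
      positivity
    linarith
  done

/-- In a metric space, every closed set is the zero set of a continuous function. -/
theorem aux_zero_of_metric {X : Type*} [MetricSpace X]
    (F : Set X) (hF : IsClosed F) : ∃ f : X → ℝ, Continuous f ∧ F = f ⁻¹' {0} := by
  rcases F.eq_empty_or_nonempty with rfl | hne
  · exact ⟨fun _ => 1, continuous_const, by simp⟩
  · refine ⟨fun x => infDist x F, continuous_infDist_pt F, ?_⟩
    ext x
    simp only [mem_preimage, mem_singleton_iff]
    exact hF.mem_iff_infDist_zero hne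

/-- Zero-set property for a product of a locally compact second countable Hausdorff
space with zero-set property and another space with zero-set property. -/
theorem aux_zero_prod {M Θ : Type*} [TopologicalSpace M] [TopologicalSpace Θ]
    [T2Space M] [LocallyCompactSpace M] [SecondCountableTopology M]
    (hM : ∀ F : Set M, IsClosed F → ∃ f : M → ℝ, Continuous f ∧ F = f ⁻¹' {0})
    (hΘ : ∀ F : Set Θ, IsClosed F → ∃ f : Θ → ℝ, Continuous f ∧ F = f ⁻¹' {0})
    (F : Set (M × Θ)) (hF : IsClosed F) :
    ∃ f : M × Θ → ℝ, Continuous f ∧ F = f ⁻¹' {0} := by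
  obtain ⟨b, hbcount, -, hb⟩ := TopologicalSpace.exists_countable_basis M
  set T : Set (Set M) := {B ∈ b | IsCompact (closure B)} with hT
  have hTcount : T.Countable := hbcount.mono (sep_subset _ _)
  set U : Set M → Set Θ := fun B => {θ | ∀ k ∈ closure B, (k, θ) ∉ F} with hU
  -- U B is open when closure B is compact
  have hUopen : ∀ B : Set M, IsCompact (closure B) → IsOpen (U B) := by
    intro B hBc
    rw [isOpen_iff_mem_nhds]
    intro θ hθ
    have hsub : closure B ×ˢ ({θ} : Set Θ) ⊆ Fᶜ := by
      rintro ⟨k, θ'⟩ ⟨hk, hθ'⟩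
      simp only [mem_singleton_iff] at hθ'
      subst hθ'
      exact hθ k hk
    obtain ⟨u, v, -, hv, hBu, hθv, huv⟩ :=
      generalized_tube_lemma hBc isCompact_singleton hF.isOpen_compl hsub
    refine Filter.mem_of_superset (hv.mem_nhds (hθv rfl)) ?_
    intro θ' hθ' k hk
    exact huv ⟨hBu hk, hθ'⟩
  -- the complement of F is the union of B ×ˢ U B over B ∈ T
  have hcover : Fᶜ = ⋃ B ∈ T, B ×ˢ U B := by
    apply Subset.antisymm
    · rintro ⟨k, θ⟩ hkθ
      obtain ⟨v, w, hvo, hwo, hkv, hθw, hvw⟩ :=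
        isOpen_prod_iff.mp hF.isOpen_compl k θ hkθ
      obtain ⟨L, hLc, hkL, hLv⟩ :=
        exists_compact_between isCompact_singleton hvo (singleton_subset_iff.mpr hkv)
      obtain ⟨B, hBb, hkB, hBL⟩ :=
        hb.exists_subset_of_mem_open (hkL rfl) isOpen_interior
      have hclB : closure B ⊆ L :=
        closure_minimal (hBL.trans interior_subset) hLc.isClosed
      have hBc : IsCompact (closure B) :=
        hLc.of_isClosed_subset isClosed_closure hclB
      have hBT : B ∈ T := ⟨hBb, hBc⟩
      refine mem_iUnion₂.mpr ⟨B, hBT, hkB, ?_⟩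
      intro k' hk' hmem
      exact hvw ⟨hLv (hclB hk'), hθw⟩ hmem
    · rintro ⟨k, θ⟩ hkθ
      obtain ⟨B, hBT, hkB, hθU⟩ := mem_iUnion₂.mp hkθ
      exact hθU k (subset_closure hkB)
  -- enumerate T
  haveI : Countable ↥T := hTcount.to_subtype
  obtain ⟨ι, hι⟩ := Countable.exists_injective_nat ↥T
  -- zero functions for the two factors
  have hUclosed : ∀ i : ↥T, IsClosed (U i.1)ᶜ :=
    fun i => (hUopen i.1 i.2.2).isClosed_compl
  have hBclosed : ∀ i : ↥T, IsClosed (i.1 : Set M)ᶜ :=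
    fun i => (hb.isOpen i.2.1).isClosed_compl
  choose g hgc hgeq using fun i : ↥T => hΘ _ (hUclosed i)
  choose h hhc hheq using fun i : ↥T => hM _ (hBclosed i)
  have hmemB : ∀ (i : ↥T) (k : M), k ∈ (i.1 : Set M) ↔ h i k ≠ 0 := by
    intro i k
    constructor
    · intro hk h0
      have : k ∈ (i.1 : Set M)ᶜ := (hheq i) ▸ (by simpa using h0)
      exact this hk
    · intro h0
      by_contra hk
      exact h0 (by have : k ∈ (h i) ⁻¹' {0} := (hheq i) ▸ hk; simpa using this)
  have hmemU : ∀ (i : ↥T) (θ : Θ), θ ∈ U i.1 ↔ g i θ ≠ 0 := by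
    intro i θ
    constructor
    · intro hk h0
      have : θ ∈ (U i.1)ᶜ := (hgeq i) ▸ (by simpa using h0)
      exact this hk
    · intro h0
      by_contra hk
      exact h0 (by have : θ ∈ (g i) ⁻¹' {0} := (hgeq i) ▸ hk; simpa using this)
  -- the summed function
  set φ : ↥T → M × Θ → ℝ :=
    fun i x => (1/2 : ℝ) ^ (ι i) * min (|h i x.1| * |g i x.2|) 1 with hφ
  have hφnonneg : ∀ i x, 0 ≤ φ i x := by
    intro i x
    apply mul_nonneg (by positivity)
    exact le_min (mul_nonneg (abs_nonneg _) (abs_nonneg _)) zero_le_one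
  have hφle : ∀ i x, ‖φ i x‖ ≤ (1/2 : ℝ) ^ (ι i) := by
    intro i x
    rw [Real.norm_eq_abs, abs_of_nonneg (hφnonneg i x)]
    calc (1/2 : ℝ) ^ (ι i) * min (|h i x.1| * |g i x.2|) 1
        ≤ (1/2 : ℝ) ^ (ι i) * 1 :=
          mul_le_mul_of_nonneg_left (min_le_right _ _) (by positivity)
      _ = (1/2 : ℝ) ^ (ι i) := mul_one _
  have hu : Summable (fun i : ↥T => (1/2 : ℝ) ^ (ι i)) :=
    (summable_geometric_of_lt_one (by norm_num) (by norm_num)).comp_injective hι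
  have hsum : ∀ x, Summable fun i => φ i x := fun x =>
    Summable.of_nonneg_of_le (fun i => hφnonneg i x)
      (fun i => (le_abs_self _).trans ((Real.norm_eq_abs _) ▸ hφle i x)) hu
  have hφcont : ∀ i : ↥T, Continuous (φ i) := by
    intro i
    apply continuous_const.mul
    exact ((((hhc i).comp continuous_fst).abs.mul
      (((hgc i).comp continuous_snd).abs)).min continuous_const)
  have hcont : Continuous fun x => ∑' i, φ i x := continuous_tsum hφcont hu hφle
  refine ⟨fun x => ∑' i, φ i x, hcont, ?_⟩
  ext x
  simp only [mem_preimage, mem_singleton_iff]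
  constructor
  · intro hx
    have hzero : ∀ i : ↥T, φ i x = 0 := by
      intro i
      have hnot : x ∉ (i.1 : Set M) ×ˢ U i.1 := by
        intro hmem
        have : x ∈ Fᶜ := hcover ▸ mem_iUnion₂.mpr ⟨i.1, i.2, hmem⟩
        exact this hx
      have : ¬(x.1 ∈ (i.1 : Set M) ∧ x.2 ∈ U i.1) := by
        intro ⟨h1, h2⟩; exact hnot ⟨h1, h2⟩
      rcases not_and_or.mp this with h1 | h2
      · have : h i x.1 = 0 := by
          by_contra h0; exact h1 ((hmemB i x.1).mpr h0)
        simp [hφ, this]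
      · have : g i x.2 = 0 := by
          by_contra h0; exact h2 ((hmemU i x.2).mpr h0)
        simp [hφ, this]
    calc ∑' i, φ i x = ∑' _ : ↥T, (0:ℝ) := tsum_congr hzero
      _ = 0 := tsum_zero
  · intro hx
    by_contra hxF
    have : x ∈ Fᶜ := hxF
    rw [hcover] at this
    obtain ⟨B, hBT, hx1, hx2⟩ := mem_iUnion₂.mp this
    set i : ↥T := ⟨B, hBT⟩ with hi
    have hh : h i x.1 ≠ 0 := (hmemB i x.1).mp hx1
    have hg : g i x.2 ≠ 0 := (hmemU i x.2).mp hx2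
    have hφpos : 0 < φ i x := by
      apply mul_pos (by positivity)
      exact lt_min (mul_pos (abs_pos.mpr hh) (abs_pos.mpr hg)) one_pos
    have hle : φ i x ≤ ∑' j, φ j x := Summable.le_tsum (hsum x) i fun j _ => hφnonneg j x
    rw [hx] at hle
    linarith

/-- The product of the strictly positive orthant of `ℝⁿ` with a perfectly normal T1
space is perfectly normal. -/
theorem stmt10 {Θ : Type*} [TopologicalSpace Θ] [T1Space Θ] [PerfectlyNormalSpace Θ]
    (n : ℕ) (hn : 0 < n) :
    PerfectlyNormalSpace ({p : Fin n → ℝ // ∀ i, 0 < p i} × Θ) := by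
  set P := {p : Fin n → ℝ // ∀ i, 0 < p i}
  have hopen : IsOpen {p : Fin n → ℝ | ∀ i, 0 < p i} := by
    have : {p : Fin n → ℝ | ∀ i, 0 < p i} = Set.pi univ (fun _ => Ioi (0:ℝ)) := by
      ext p; simp [Set.mem_pi]
    rw [this]
    exact isOpen_set_pi finite_univ (fun i _ => isOpen_Ioi)
  haveI : LocallyCompactSpace P := hopen.isLocallyClosed.locallyCompactSpace
  exact aux_pn_of_zero (aux_zero_prod (fun F hF => aux_zero_of_metric F hF)
    (fun F hF => aux_zero_of_pn F hF))
end

section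
/- Let A ⊆ ℝ^m be a countable set of vectors with nonnegative coordinates that is discrete in the subspace topology (every point of A is isolated in A). Suppose that for every price-wealth pair (p,w) with p ∈ ℝ^m, p_i > 0 for all i, and w > 0, the budget set B(p,w) = {a ∈ A : p·a ≤ w} is finite. Then the budget correspondence (p,w) ↦ B(p,w) is upper hemicontinuous on the set of such price-wealth pairs: for every subset G ⊆ A, the set {(p,w) : B(p,w) ⊆ G} is open in ℝ^m₊₊ × ℝ₊₊ (with the Euclidean subspace topology). -/
open scoped BigOperators

/-- The budget correspondence `(p,w) ↦ {a ∈ A : p·a ≤ w}` over a countable discrete set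
of nonnegative commodity bundles, with finite budget sets, is upper hemicontinuous on
the set of strictly positive price-wealth pairs. -/
theorem stmt11 (m : ℕ) (A : Set (Fin m → ℝ)) (hA : A.Countable)
    (hApos : ∀ a ∈ A, ∀ i, 0 ≤ a i) (hdisc : DiscreteTopology A)
    (hfin : ∀ p : Fin m → ℝ, ∀ w : ℝ, (∀ i, 0 < p i) → 0 < w →
      {a ∈ A | ∑ i, p i * a i ≤ w}.Finite) :
    ∀ G : Set (Fin m → ℝ), G ⊆ A →
      IsOpen {y : {pw : (Fin m → ℝ) × ℝ // (∀ i, 0 < pw.1 i) ∧ 0 < pw.2} |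
        {a ∈ A | ∑ i, y.val.1 i * a i ≤ y.val.2} ⊆ G} := by
  intro G hG
  rw [isOpen_iff_mem_nhds]
  intro y hy
  set p := y.val.1 with hpdef
  set w := y.val.2 with hwdef
  have hp : ∀ i, 0 < p i := y.prop.1
  have hw : 0 < w := y.prop.2
  -- Finite superset of all nearby budget sets
  have hFfin := hfin (fun i => p i / 2) (2 * w) (fun i => by have := hp i; positivity)
    (by positivity)
  set S : Set (Fin m → ℝ) :=
    {a ∈ A | (∑ i, (p i / 2) * a i ≤ 2 * w) ∧ w < ∑ i, p i * a i} with hSdef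
  have hSfin : S.Finite := hFfin.subset (fun a ha => ⟨ha.1, ha.2.1⟩)
  -- continuity facts
  have hcont1 : ∀ i, Continuous fun (y' : {pw : (Fin m → ℝ) × ℝ //
      (∀ i, 0 < pw.1 i) ∧ 0 < pw.2}) => y'.val.1 i :=
    fun i => (continuous_apply i).comp (continuous_fst.comp continuous_subtype_val)
  have hcont2 : Continuous fun (y' : {pw : (Fin m → ℝ) × ℝ //
      (∀ i, 0 < pw.1 i) ∧ 0 < pw.2}) => y'.val.2 :=
    continuous_snd.comp continuous_subtype_val
  set U : Set {pw : (Fin m → ℝ) × ℝ // (∀ i, 0 < pw.1 i) ∧ 0 < pw.2} :=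
    (⋂ i, {y' | p i / 2 < y'.val.1 i}) ∩
      ({y' | y'.val.2 < 2 * w} ∩ ⋂ a ∈ S, {y' | y'.val.2 < ∑ i, y'.val.1 i * a i}) with hUdef
  have hUopen : IsOpen U := by
    apply IsOpen.inter
    · exact isOpen_iInter_of_finite fun i => isOpen_lt continuous_const (hcont1 i)
    apply IsOpen.inter
    · exact isOpen_lt hcont2 continuous_const
    · refine hSfin.isOpen_biInter fun a _ => ?_
      exact isOpen_lt hcont2 (continuous_finset_sum _ fun i _ => (hcont1 i).mul continuous_const)
  have hyU : y ∈ U := by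
    refine ⟨?_, ?_, ?_⟩
    · simp only [Set.mem_iInter, Set.mem_setOf_eq]
      intro i; have := hp i; linarith
    · simp only [Set.mem_setOf_eq]; linarith
    · simp only [Set.mem_iInter, Set.mem_setOf_eq]
      intro a ha; exact ha.2.2
  refine Filter.mem_of_superset (hUopen.mem_nhds hyU) ?_
  intro y' hy'
  obtain ⟨h1, h2, h3⟩ := hy'
  simp only [Set.mem_iInter, Set.mem_setOf_eq] at h1 h2 h3
  intro a ha
  obtain ⟨haA, hab⟩ := ha
  have hmono : ∑ i, (p i / 2) * a i ≤ ∑ i, y'.val.1 i * a i :=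
    Finset.sum_le_sum fun i _ => mul_le_mul_of_nonneg_right (le_of_lt (h1 i)) (hApos a haA i)
  have hle : ∑ i, (p i / 2) * a i ≤ 2 * w := le_trans hmono (le_trans hab (le_of_lt h2))
  by_cases hcase : w < ∑ i, p i * a i
  · exact absurd hab (not_le.mpr (h3 a ⟨haA, hle, hcase⟩))
  · exact hy ⟨haA, not_lt.mp hcase⟩
end

section
/- Let Y = [0,1] × {0,1,2} be endowed with the order topology of the lexicographic order (where {0,1,2} carries the order 0 < 1 < 2, and (x₁,x₂) <_lex (y₁,y₂) iff x₁ < y₁, or x₁ = y₁ and x₂ < y₂). Let I = [c,d] ⊆ [0,1] be a closed interval with c < d, and let F = I × {0,2} ⊆ Y (the points of I whose second coordinate is an extreme element of {0,1,2}). Then there exists no continuous function f : Y → ℝ such that f⁻¹({0}) = F. -/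
/-- In the lexicographic order topology on `Y = [0,1] × {0,1,2}`, the set
`F = I × {0,2}` (for a closed nondegenerate interval `I = [c,d] ⊆ [0,1]`) is not a zero
set: no continuous real-valued function on `Y` has `F` as the preimage of `{0}`. -/
theorem stmt13 :
    letI : TopologicalSpace (Lex (Set.Icc (0 : ℝ) 1 × Fin 3)) := Preorder.topology _
    ∀ c d : Set.Icc (0 : ℝ) 1, c < d →
      ¬ ∃ f : Lex (Set.Icc (0 : ℝ) 1 × Fin 3) → ℝ, Continuous f ∧
        f ⁻¹' {0} = {y : Lex (Set.Icc (0 : ℝ) 1 × Fin 3) |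
          (c ≤ (ofLex y).1 ∧ (ofLex y).1 ≤ d) ∧
          ((ofLex y).2 = 0 ∨ (ofLex y).2 = 2)} := by
  letI : TopologicalSpace (Lex (Set.Icc (0 : ℝ) 1 × Fin 3)) := Preorder.topology _
  haveI : OrderTopology (Lex (Set.Icc (0 : ℝ) 1 × Fin 3)) := ⟨rfl⟩
  intro c d hcd
  rintro ⟨f, hf, hpre⟩
  -- f vanishes at points (x, 0) with c ≤ x ≤ d
  have hzero : ∀ x : Set.Icc (0:ℝ) 1, c ≤ x → x ≤ d → f (toLex (x, (0 : Fin 3))) = 0 := by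
    intro x h1 h2
    have := (Set.ext_iff.mp hpre (toLex (x, (0:Fin 3)))).mpr
    simpa using this (by simp [h1, h2])
  -- f does not vanish at points (x, 1)
  have hne : ∀ x : Set.Icc (0:ℝ) 1, f (toLex (x, (1 : Fin 3))) ≠ 0 := by
    intro x h
    have := (Set.ext_iff.mp hpre (toLex (x, (1:Fin 3)))).mp h
    simp only [Set.mem_setOf_eq, ofLex_toLex] at this
    rcases this.2 with h' | h' <;> exact absurd h' (by decide)
  set S : ℕ → Set (Set.Icc (0:ℝ) 1) := fun n =>
    {x | (c < x ∧ x ≤ d) ∧ 1/(n+1:ℝ) ≤ |f (toLex (x, (1:Fin 3)))|} with hS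
  -- key separation property for points of S n
  have key : ∀ n : ℕ, ∀ x ∈ S n, ∃ q : ℚ, (q:ℝ) < (x:ℝ) ∧
      ∀ z ∈ S n, z < x → ((z:ℝ) : ℝ) < q := by
    intro n x hx
    obtain ⟨⟨hcx, hxd⟩, _⟩ := hx
    have hx0 : f (toLex (x, (0:Fin 3))) = 0 := hzero x hcx.le hxd
    have hmem : toLex (x,(0:Fin 3)) ∈ f ⁻¹' Metric.ball 0 (1/(n+1:ℝ)) := by
      simp only [Set.mem_preimage, Metric.mem_ball, hx0, dist_self]
      positivity
    have hnb : f ⁻¹' Metric.ball 0 (1/(n+1:ℝ)) ∈ nhds (toLex (x,(0:Fin 3))) :=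
      (Metric.isOpen_ball.preimage hf).mem_nhds hmem
    obtain ⟨l, hl, hsub⟩ := exists_Ioc_subset_of_mem_nhds hnb
      ⟨toLex (c,(0:Fin 3)), Prod.Lex.lt_iff.mpr (Or.inl hcx)⟩
    have hl1 : (ofLex l).1 < x := by
      have hl' : toLex (ofLex l) < toLex (x, (0:Fin 3)) := by simpa using hl
      rcases Prod.Lex.lt_iff.mp hl' with h | ⟨_, h2⟩
      · exact h
      · exact absurd h2 (by simp)
    obtain ⟨q, hq1, hq2⟩ := exists_rat_btwn (show ((ofLex l).1:ℝ) < (x:ℝ) from hl1)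
    refine ⟨q, hq2, ?_⟩
    intro z hz hzx
    have hzl : toLex ((z : Set.Icc (0:ℝ) 1), (1:Fin 3)) ≤ l := by
      by_contra hlt
      push_neg at hlt
      have hmem2 : toLex (z,(1:Fin 3)) ∈ Set.Ioc l (toLex (x,(0:Fin 3))) :=
        ⟨hlt, le_of_lt (Prod.Lex.lt_iff.mpr (Or.inl hzx))⟩
      have hb := hsub hmem2
      simp only [Set.mem_preimage, Metric.mem_ball, Real.dist_eq, sub_zero] at hb
      exact absurd hz.2 (not_le.2 hb)
    have hzle : (z : Set.Icc (0:ℝ) 1) ≤ (ofLex l).1 := by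
      have hzl' : toLex ((z : Set.Icc (0:ℝ) 1), (1:Fin 3)) ≤ toLex (ofLex l) := by
        simpa using hzl
      rcases Prod.Lex.le_iff.mp hzl' with h | ⟨h1, _⟩
      · exact h.le
      · exact le_of_eq h1
    calc ((z : Set.Icc (0:ℝ) 1) : ℝ) ≤ ((ofLex l).1 : ℝ) := hzle
      _ < q := hq1
  -- each S n is countable
  have hcnt : ∀ n, (S n).Countable := by
    intro n
    rw [Set.countable_iff_exists_injOn]
    classical
    choose! q hq1 hq2 using key
    refine ⟨fun x => Encodable.encode (q n x), ?_⟩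
    intro x hx y hy hxy
    have hinj : q n x = q n y := Encodable.encode_injective hxy
    rcases lt_trichotomy x y with h | h | h
    · exfalso
      have h1 : ((q n x : ℚ) : ℝ) < (x:ℝ) := hq1 n x hx
      have h2 : ((x:ℝ)) < ((q n y : ℚ) : ℝ) := hq2 n y hy x hx h
      rw [hinj] at h1
      exact absurd (h1.trans h2) (lt_irrefl _)
    · exact h
    · exfalso
      have h1 : ((q n y : ℚ) : ℝ) < (y:ℝ) := hq1 n y hy
      have h2 : ((y:ℝ)) < ((q n x : ℚ) : ℝ) := hq2 n x hx y hy h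
      rw [hinj] at h2
      exact absurd (h1.trans h2) (lt_irrefl _)
  -- the sets S n cover Ioc c d
  have hcover : (Set.Ioc c d) ⊆ ⋃ n, S n := by
    intro x hx
    have h0 : 0 < |f (toLex (x,(1:Fin 3)))| := abs_pos.2 (hne x)
    obtain ⟨n, hn⟩ := exists_nat_one_div_lt h0
    exact Set.mem_iUnion.2 ⟨n, ⟨⟨hx.1, hx.2⟩, hn.le⟩⟩
  have hIocc : (Set.Ioc c d : Set (Set.Icc (0:ℝ) 1)).Countable :=
    (Set.countable_iUnion hcnt).mono hcover
  -- transfer to a real interval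
  have hreal : (Set.Ioc (c:ℝ) (d:ℝ)).Countable := by
    refine (hIocc.image Subtype.val).mono ?_
    intro t ht
    have h0t : (0:ℝ) ≤ t := le_trans c.2.1 ht.1.le
    have ht1 : t ≤ 1 := le_trans ht.2 d.2.2
    refine ⟨⟨t, h0t, ht1⟩, ⟨?_, ?_⟩, rfl⟩
    · exact Subtype.mk_lt_mk.mpr ht.1 |>.trans_le (le_refl _) |>.trans_le (le_refl _) |> id
    · exact Subtype.mk_le_mk.mpr ht.2
  -- contradiction with positive measure
  have hm0 : MeasureTheory.volume (Set.Ioc (c:ℝ) (d:ℝ)) = 0 :=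
    hreal.measure_zero _
  rw [Real.volume_Ioc] at hm0
  have hpos : (0:ℝ) < (d:ℝ) - (c:ℝ) := sub_pos.2 (Subtype.coe_lt_coe.2 hcd)
  exact absurd hm0 (ne_of_gt (ENNReal.ofReal_pos.2 hpos))
end
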